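/- arXiv:2403.10196 — 5 statements merged into one kernel-verified Lean document; each statement's English description precedes it below -/
import Mathlib

section
/- Let Γ be a compact subset of Euclidean ℝⁿ, let δ > 0, and let m ∈ ℕ be such that Γ is not contained in the closed δ-neighbourhood of any m-dimensional linear subspace of ℝⁿ (i.e., for every m-dimensional subspace P there exists x ∈ Γ with dist(x, P) ≥ δ). Then there exist points x₁, …, x_{m+1} ∈ Γ such that MinHeight(x₁,…,x_{m+1}) ≥ δ, where MinHeight(a₁,…,a_k) := min over j of dist(a_j, span(a₁,…,â_j,…,a_k)). -/
open scoped RealInnerProductSpace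
open MeasureTheory

noncomputable section

abbrev E (n : ℕ) := EuclideanSpace ℝ (Fin n)

def wedge {n : ℕ} (v w : E n) : Matrix (Fin n) (Fin n) ℝ :=
  Matrix.of fun i j => v i * w j - w i * v j

def innerL {n : ℕ} (A B : Matrix (Fin n) (Fin n) ℝ) : ℝ :=
  (1 / 2) * ∑ i, ∑ j, A i j * B i j

def normL {n : ℕ} (A : Matrix (Fin n) (Fin n) ℝ) : ℝ := Real.sqrt (innerL A A)

def minHeight {n k : ℕ} (a : Fin k → E n) : ℝ :=
  ⨅ j, Metric.infDist (a j) (↑(Submodule.span ℝ (a '' {i | i ≠ j})) : Set (E n))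

/-! ### Auxiliary machinery: Gram determinants -/

def gram {n k : ℕ} (a : Fin k → E n) : Matrix (Fin k) (Fin k) ℝ :=
  Matrix.of fun i l => ⟪a i, a l⟫

lemma gram_posSemidef {n k : ℕ} (a : Fin k → E n) : (gram a).PosSemidef := by
  set B : Matrix (Fin k) (Fin n) ℝ := Matrix.of fun i j => a i j with hB
  have : gram a = B * B.conjTranspose := by
    ext i l
    simp [gram, hB, Matrix.mul_apply, PiLp.inner_apply, RCLike.inner_apply,
      Matrix.conjTranspose_apply]
    exact Finset.sum_congr rfl fun _ _ => mul_comm _ _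
  rw [this]
  exact Matrix.posSemidef_self_mul_conjTranspose _

lemma gram_det_nonneg {n k : ℕ} (a : Fin k → E n) : 0 ≤ (gram a).det := by
  have h := gram_posSemidef a
  rw [h.isHermitian.det_eq_prod_eigenvalues]
  refine Finset.prod_nonneg fun i _ => ?_
  simpa using h.eigenvalues_nonneg i

lemma infDist_subspace {n : ℕ} (K : Submodule ℝ (E n)) (x : E n) :
    Metric.infDist x (K : Set (E n)) = ‖x - (K.orthogonalProjectionOnto x : E n)‖ := by
  rw [Metric.infDist_eq_iInf, ← Submodule.starProjection_apply, Submodule.starProjection_minimal]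
  simp only [dist_eq_norm]
  rfl

lemma image_ne_eq_range {n k : ℕ} (a : Fin (k+1) → E n) (j : Fin (k+1)) :
    a '' {i | i ≠ j} = Set.range (a ∘ j.succAbove) := by
  rw [Set.range_comp, Fin.range_succAbove]
  rfl

/-- Key factorization: the Gram determinant of an `(k+1)`-tuple equals the squared distance
from `a j` to the span of the remaining vectors, times the Gram determinant of the rest. -/
lemma gram_det_eq {n k : ℕ} (a : Fin (k+1) → E n) (j : Fin (k+1)) :
    (gram a).det =
      (Metric.infDist (a j) (↑(Submodule.span ℝ (a '' {i | i ≠ j})) : Set (E n)))^2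
        * (gram (a ∘ j.succAbove)).det := by
  set K : Submodule ℝ (E n) := Submodule.span ℝ (Set.range (a ∘ j.succAbove)) with hKdef
  have hspan : Submodule.span ℝ (a '' {i | i ≠ j}) = K := by rw [image_ne_eq_range]
  set p : E n := (K.orthogonalProjectionOnto (a j) : E n) with hp
  set u : E n := a j - p with hu
  have hmemK : ∀ i : Fin k, a (j.succAbove i) ∈ K := fun i =>
    Submodule.subset_span ⟨i, rfl⟩
  have huo : u ∈ Kᗮ := Submodule.sub_starProjection_mem_orthogonal _
  have huv : ∀ v ∈ K, ⟪u, v⟫ = 0 := fun v hv =>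
    (Submodule.mem_orthogonal' K u).1 huo v hv
  -- coefficients of p
  obtain ⟨c, hc⟩ : ∃ c : Fin k → ℝ, ∑ i, c i • a (j.succAbove i) = p := by
    rw [← Submodule.mem_span_range_iff_exists_fun]
    exact (K.orthogonalProjectionOnto (a j)).2
  set e : Fin (k+1) → ℝ :=
    fun t => (if t = j then (1:ℝ) else 0) - ∑ i, (if j.succAbove i = t then c i else 0) with he
  have hej : e j = 1 := by
    have h0 : ∑ i, (if j.succAbove i = j then c i else 0) = 0 :=
      Finset.sum_eq_zero fun i _ => by simp [Fin.succAbove_ne j i]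
    simp [he, h0]
  set A : Matrix (Fin (k+1)) (Fin (k+1)) ℝ := gram a with hA
  have hsum_e' : ∀ f : Fin (k+1) → ℝ,
      (∑ t, e t * f t) = f j - ∑ i, c i * f (j.succAbove i) := by
    intro f
    simp only [he, sub_mul, Finset.sum_sub_distrib, ite_mul, one_mul, zero_mul,
      Finset.sum_ite_eq', Finset.mem_univ, if_pos, Finset.sum_mul]
    congr 1
    rw [Finset.sum_comm]
    congr 1
    ext i
    rw [Finset.sum_eq_single (j.succAbove i)] <;> simp +contextual [eq_comm]
  -- row operation
  set A1 : Matrix (Fin (k+1)) (Fin (k+1)) ℝ := A.updateRow j (fun l => ⟪u, a l⟫) with hA1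
  have hA1det : A1.det = A.det := by
    have : (fun l => ⟪u, a l⟫) = ∑ t, e t • A t := by
      funext l
      rw [Finset.sum_apply]
      simp only [Pi.smul_apply, smul_eq_mul]
      rw [hsum_e' (fun t => A t l)]
      simp only [hA, gram, Matrix.of_apply]
      rw [hu, inner_sub_left, ← hc, sum_inner]
      congr 1
      exact Finset.sum_congr rfl fun i _ => real_inner_smul_left _ _ _
    rw [hA1, this, Matrix.det_updateRow_sum A j e, hej, one_smul]
  -- column operation
  set b : Fin (k+1) → E n := Function.update a j u with hb
  have hbj : b j = u := Function.update_self j u a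
  have hbne : ∀ i, i ≠ j → b i = a i := fun i hi => Function.update_of_ne hi u a
  set A2 : Matrix (Fin (k+1)) (Fin (k+1)) ℝ := A1.updateCol j (fun i => ⟪b i, u⟫) with hA2
  have hA2det : A2.det = A1.det := by
    have : (fun i => ⟪b i, u⟫) = fun i => ∑ t, e t • A1 i t := by
      funext i
      simp only [smul_eq_mul]
      rw [hsum_e' (fun t => A1 i t)]
      by_cases hij : i = j
      · have hr : ∀ t, A1 i t = ⟪u, a t⟫ := fun t => by
          rw [hA1, hij, Matrix.updateRow_self]
        simp only [hr]
        rw [hij, hbj]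
        have hps : ∑ t, c t * ⟪u, a (j.succAbove t)⟫ = ⟪u, p⟫ := by
          rw [← hc, inner_sum]
          exact Finset.sum_congr rfl fun t _ => (real_inner_smul_right _ _ _).symm
        rw [hps, ← inner_sub_right, ← hu]
      · have hr : ∀ t, A1 i t = ⟪a i, a t⟫ := fun t => by
          rw [hA1, Matrix.updateRow_ne hij]; rfl
        simp only [hr]
        rw [hbne i hij]
        have hps : ∑ t, c t * ⟪a i, a (j.succAbove t)⟫ = ⟪a i, p⟫ := by
          rw [← hc, inner_sum]
          exact Finset.sum_congr rfl fun t _ => (real_inner_smul_right _ _ _).symm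
        rw [hps, ← inner_sub_right, ← hu]
    rw [hA2, this, Matrix.det_updateCol_sum A1 j e, hej, one_smul]
  -- A2 is the gram matrix of b
  have hA2gram : A2 = gram b := by
    ext i l
    by_cases hlj : l = j
    · subst hlj
      rw [hA2, Matrix.updateCol_self]
      simp [gram, hbj]
    · rw [hA2, Matrix.updateCol_ne hlj]
      by_cases hij : i = j
      · subst hij
        rw [hA1, Matrix.updateRow_self]
        simp [gram, hbj, hbne l hlj]
      · rw [hA1, Matrix.updateRow_ne hij]
        simp [gram, hA, hbne l hlj, hbne i hij]
  -- expand det of gram b along row j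
  have hrow : ∀ l, l ≠ j → (gram b) j l = 0 := by
    intro l hl
    obtain ⟨i, rfl⟩ : ∃ i, j.succAbove i = l := by
      rcases Fin.exists_succAbove_eq hl with ⟨i, hi⟩
      exact ⟨i, hi⟩
    simp only [gram, Matrix.of_apply, hbj, hbne _ (Fin.succAbove_ne j i)]
    exact huv _ (hmemK i)
  have hdiag : (gram b) j j = ‖u‖^2 := by
    show ⟪b j, b j⟫ = _
    rw [hbj, real_inner_self_eq_norm_sq]
  have hsub : (gram b).submatrix j.succAbove j.succAbove = gram (a ∘ j.succAbove) := by
    ext i l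
    simp [gram, Matrix.submatrix_apply, hbne _ (Fin.succAbove_ne j i),
      hbne _ (Fin.succAbove_ne j l)]
  have hdetb : (gram b).det = ‖u‖^2 * (gram (a ∘ j.succAbove)).det := by
    rw [Matrix.det_succ_row (gram b) j]
    rw [Finset.sum_eq_single j]
    · rw [hdiag, hsub]
      have : (-1 : ℝ) ^ ((j : ℕ) + (j : ℕ)) = 1 := Even.neg_one_pow ⟨j, rfl⟩
      rw [this, one_mul]
    · intro l _ hl
      rw [hrow l hl, mul_zero, zero_mul]
    · intro hj; exact absurd (Finset.mem_univ j) hj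
  -- conclude
  have hfin : (gram a).det = ‖u‖^2 * (gram (a ∘ j.succAbove)).det := by
    rw [← hA1det, ← hA2det, hA2gram, hdetb]
  rw [hfin, hspan, infDist_subspace]

lemma exists_superset_finrank {n m : ℕ} (hm : m ≤ n) :
    ∀ (j : ℕ) (W : Submodule ℝ (E n)), Module.finrank ℝ W + j = m →
      ∃ P : Submodule ℝ (E n), W ≤ P ∧ Module.finrank ℝ P = m := by
  intro j
  induction j with
  | zero => exact fun W hW => ⟨W, le_rfl, by simpa using hW⟩
  | succ j ih =>
    intro W hW
    have hlt : Module.finrank ℝ W < Module.finrank ℝ (E n) := by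
      have : Module.finrank ℝ (E n) = n := finrank_euclideanSpace_fin
      omega
    obtain ⟨x, hx⟩ := Submodule.exists_of_finrank_lt W hlt
    have hx1 : x ∉ W := by simpa using hx 1 one_ne_zero
    have hx0 : x ≠ 0 := fun h => hx1 (h ▸ W.zero_mem)
    have hinf : W ⊓ (ℝ ∙ x) = ⊥ := by
      rw [eq_bot_iff]
      rintro y ⟨hyW, hyx⟩
      obtain ⟨r, rfl⟩ := Submodule.mem_span_singleton.1 hyx
      rcases eq_or_ne r 0 with rfl | hr
      · simp
      · exact absurd hyW (hx r hr)
    have hrank : Module.finrank ℝ ↥(W ⊔ ℝ ∙ x) = Module.finrank ℝ W + 1 := by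
      have := Submodule.finrank_sup_add_finrank_inf_eq W (ℝ ∙ x)
      rw [hinf, finrank_bot, finrank_span_singleton hx0] at this
      omega
    obtain ⟨P, hP1, hP2⟩ := ih (W ⊔ ℝ ∙ x) (by omega)
    exact ⟨P, le_trans le_sup_left hP1, hP2⟩

lemma gram_continuous {n k : ℕ} : Continuous fun a : Fin k → E n => (gram a).det := by
  apply Continuous.matrix_det
  exact continuous_matrix fun i l =>
    show Continuous fun a : Fin k → E n => ⟪a i, a l⟫ from
      Continuous.inner (continuous_apply i) (continuous_apply l)

lemma finrank_span_range_le_aux {n k : ℕ} (z : Fin k → E n) :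
    Module.finrank ℝ (Submodule.span ℝ (Set.range z)) ≤ k := by
  classical
  refine le_trans (finrank_span_le_card (Set.range z)) ?_
  rw [Set.toFinset_range]
  exact le_trans Finset.card_image_le (by simp)

/-- If a compact `Γ ⊆ ℝⁿ` is not contained in the closed `δ`-neighbourhood
of any `m`-dimensional subspace, then some `(m+1)`-tuple of points of `Γ` has
minimal height at least `δ`. -/
theorem stmt_3 (n m : ℕ) (hm : m ≤ n) (Γ : Set (E n)) (hΓ : IsCompact Γ)
    (δ : ℝ) (hδ : 0 < δ)
    (h : ∀ P : Submodule ℝ (E n), Module.finrank ℝ P = m →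
      ∃ x ∈ Γ, δ ≤ Metric.infDist x (P : Set (E n))) :
    ∃ x : Fin (m + 1) → E n, (∀ j, x j ∈ Γ) ∧ δ ≤ minHeight x := by
  -- greedy construction of a tuple with large Gram determinant
  have greedy : ∀ k : ℕ, k ≤ m + 1 →
      ∃ z : Fin k → E n, (∀ i, z i ∈ Γ) ∧ δ ^ (2*k) ≤ (gram z).det := by
    intro k
    induction k with
    | zero =>
      exact fun _ => ⟨Fin.elim0, fun i => i.elim0, by simp [Matrix.det_fin_zero]⟩
    | succ k ih =>
      intro hk1
      obtain ⟨z, hzΓ, hz⟩ := ih (by omega)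
      set W : Submodule ℝ (E n) := Submodule.span ℝ (Set.range z) with hWdef
      have hWle : Module.finrank ℝ W ≤ k := finrank_span_range_le_aux z
      obtain ⟨P, hWP, hPrank⟩ :=
        exists_superset_finrank hm (m - Module.finrank ℝ W) W (by omega)
      obtain ⟨y, hyΓ, hyd⟩ := h P hPrank
      set z' : Fin (k+1) → E n := Fin.snoc z y with hz'def
      have hz'Γ : ∀ i, z' i ∈ Γ := by
        intro i
        refine Fin.lastCases ?_ ?_ i
        · simpa [hz'def, Fin.snoc_last] using hyΓ
        · intro i; simpa [hz'def, Fin.snoc_castSucc] using hzΓ i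
      have hcomp : z' ∘ (Fin.last k).succAbove = z := by
        funext i; simp [hz'def, Fin.succAbove_last, Fin.snoc_castSucc]
      have hspan' : Submodule.span ℝ (z' '' {i | i ≠ Fin.last k}) = W := by
        rw [image_ne_eq_range, hcomp]
      have hkey := gram_det_eq z' (Fin.last k)
      rw [hcomp, hspan'] at hkey
      have hlast : z' (Fin.last k) = y := Fin.snoc_last _ _
      have hdist : δ ≤ Metric.infDist y (W : Set (E n)) := by
        refine le_trans hyd (Metric.infDist_le_infDist_of_subset ?_ ⟨0, W.zero_mem⟩)
        exact fun v hv => hWP hv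
      refine ⟨z', hz'Γ, ?_⟩
      rw [hkey, hlast]
      have h1 : δ^2 ≤ (Metric.infDist y (W : Set (E n)))^2 :=
        pow_le_pow_left₀ hδ.le hdist 2
      calc δ ^ (2*(k+1)) = δ^2 * δ^(2*k) := by ring
        _ ≤ _ := mul_le_mul h1 hz (by positivity) (sq_nonneg _)
  obtain ⟨z, hzΓ, hz⟩ := greedy (m+1) le_rfl
  set S : Set (Fin (m+1) → E n) := Set.pi Set.univ (fun _ => Γ) with hSdef
  have hS : IsCompact S := isCompact_univ_pi fun _ => hΓ
  have hzS : z ∈ S := fun i _ => hzΓ i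
  obtain ⟨x, hxS, hmax⟩ := hS.exists_isMaxOn ⟨z, hzS⟩ gram_continuous.continuousOn
  have hxΓ : ∀ j, x j ∈ Γ := fun j => hxS j (Set.mem_univ j)
  have hGpos : 0 < (gram x).det :=
    lt_of_lt_of_le (by positivity) (le_trans hz (hmax hzS))
  refine ⟨x, hxΓ, ?_⟩
  rw [minHeight]
  refine le_ciInf fun j => ?_
  set W : Submodule ℝ (E n) := Submodule.span ℝ (x '' {i | i ≠ j}) with hWdef
  have hkey := gram_det_eq x j
  rw [← hWdef] at hkey
  set Gsub : ℝ := (gram (x ∘ j.succAbove)).det with hGsubdef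
  have hGsubnn : 0 ≤ Gsub := gram_det_nonneg _
  have hGsubpos : 0 < Gsub := by
    rcases hGsubnn.lt_or_eq with h' | h'
    · exact h'
    · exfalso
      rw [hkey, ← h', mul_zero] at hGpos
      exact lt_irrefl 0 hGpos
  have hWrank : Module.finrank ℝ W ≤ m := by
    rw [hWdef, image_ne_eq_range]
    exact finrank_span_range_le_aux _
  obtain ⟨P, hWP, hPrank⟩ :=
    exists_superset_finrank hm (m - Module.finrank ℝ W) W (by omega)
  obtain ⟨y, hyΓ, hyd⟩ := h P hPrank
  have hdist : δ ≤ Metric.infDist y (W : Set (E n)) := by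
    refine le_trans hyd (Metric.infDist_le_infDist_of_subset ?_ ⟨0, W.zero_mem⟩)
    exact fun v hv => hWP hv
  set x' : Fin (m+1) → E n := Function.update x j y with hx'def
  have hx'S : x' ∈ S := by
    intro i _
    rcases eq_or_ne i j with rfl | hi
    · simpa [hx'def] using hyΓ
    · simpa [hx'def, Function.update_of_ne hi] using hxΓ i
  have hkey' := gram_det_eq x' j
  have himg : x' '' {i | i ≠ j} = x '' {i | i ≠ j} := by
    refine Set.image_congr fun i hi => ?_
    exact Function.update_of_ne hi _ _
  have hcomp : x' ∘ j.succAbove = x ∘ j.succAbove := by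
    funext i
    exact Function.update_of_ne (Fin.succAbove_ne j i) _ _
  have hx'j : x' j = y := Function.update_self j y x
  rw [hx'j, himg, hcomp, ← hWdef, ← hGsubdef] at hkey'
  have hle : (gram x').det ≤ (gram x).det := hmax hx'S
  rw [hkey', hkey] at hle
  have h2 : δ^2 * Gsub ≤ (Metric.infDist (x j) (W : Set (E n)))^2 * Gsub := by
    refine le_trans ?_ hle
    exact mul_le_mul_of_nonneg_right (pow_le_pow_left₀ hδ.le hdist 2) hGsubnn
  have h3 : δ^2 ≤ (Metric.infDist (x j) (W : Set (E n)))^2 :=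
    le_of_mul_le_mul_right h2 hGsubpos
  have h4 : (0:ℝ) ≤ Metric.infDist (x j) (W : Set (E n)) := Metric.infDist_nonneg
  calc δ = Real.sqrt (δ^2) := (Real.sqrt_sq hδ.le).symm
    _ ≤ Real.sqrt ((Metric.infDist (x j) (W : Set (E n)))^2) := Real.sqrt_le_sqrt h3
    _ = _ := Real.sqrt_sq h4
end
end

section
/- Let a₁, …, a_m be vectors in Euclidean ℝⁿ with MinHeight(a₁,…,a_m) > 0. Then a₁,…,a_m are linearly independent, and every w ∈ span(a₁,…,a_m) can be written uniquely as w = λ₁a₁ + ⋯ + λ_m a_m with |λ_j| ≤ ‖w‖ / MinHeight(a₁,…,a_m) for every j ∈ {1,…,m}. -/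
open scoped RealInnerProductSpace
open MeasureTheory

noncomputable section

/-- If `MinHeight(a₁,…,a_m) > 0` then the `aⱼ` are linearly independent and
every `w` in their span is uniquely `w = Σ λⱼ aⱼ` with `|λⱼ| ≤ ‖w‖ / MinHeight`. -/
theorem stmt_4 (n m : ℕ) (a : Fin m → E n) (h : 0 < minHeight a) :
    LinearIndependent ℝ a ∧
    ∀ w ∈ Submodule.span ℝ (Set.range a), ∃ c : Fin m → ℝ,
      w = ∑ j, c j • a j ∧ (∀ j, |c j| ≤ ‖w‖ / minHeight a) ∧
      ∀ c' : Fin m → ℝ, w = ∑ j, c' j • a j → c' = c := by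
  have hle : ∀ j, minHeight a ≤
      Metric.infDist (a j) (↑(Submodule.span ℝ (a '' {i | i ≠ j})) : Set (E n)) := fun j =>
    ciInf_le ⟨0, by rintro x ⟨i, rfl⟩; exact Metric.infDist_nonneg⟩ j
  -- key coefficient bound
  have key : ∀ (c : Fin m → ℝ) (j : Fin m),
      |c j| ≤ ‖∑ i, c i • a i‖ / minHeight a := by
    intro c j
    set w := ∑ i, c i • a i with hw
    rcases eq_or_ne (c j) 0 with h0 | h0
    · rw [h0, abs_zero]
      exact div_nonneg (norm_nonneg _) h.le
    · rw [le_div_iff₀ h]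
      set s := Submodule.span ℝ (a '' {i | i ≠ j}) with hs
      have hv : w - c j • a j ∈ s := by
        have : w - c j • a j = ∑ i ∈ Finset.univ.erase j, c i • a i := by
          rw [hw, Finset.sum_erase_eq_sub (Finset.mem_univ j)]
        rw [this]
        exact Submodule.sum_mem _ fun i hi =>
          Submodule.smul_mem _ _ (Submodule.subset_span ⟨i, Finset.ne_of_mem_erase hi, rfl⟩)
      set p := (c j)⁻¹ • (c j • a j - w) with hp
      have hps : p ∈ s := by
        rw [hp]
        exact Submodule.smul_mem _ _ (by simpa using Submodule.neg_mem _ hv)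
      have hdist : Metric.infDist (a j) (s : Set (E n)) ≤ ‖a j - p‖ :=
        (Metric.infDist_le_dist_of_mem hps).trans_eq (dist_eq_norm _ _)
      have heq : a j - p = (c j)⁻¹ • w := by
        rw [hp, smul_sub, inv_smul_smul₀ h0]
        abel
      have : Metric.infDist (a j) (s : Set (E n)) ≤ ‖w‖ / |c j| := by
        calc Metric.infDist (a j) (s : Set (E n)) ≤ ‖a j - p‖ := hdist
          _ = ‖(c j)⁻¹ • w‖ := by rw [heq]
          _ = ‖w‖ / |c j| := by rw [norm_smul, norm_inv, Real.norm_eq_abs]; ring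
      have h2 := (hle j).trans this
      rw [le_div_iff₀ (abs_pos.mpr h0)] at h2
      linarith [h2]
  have hli : LinearIndependent ℝ a := by
    rw [linearIndependent_iff_notMem_span]
    intro j hj
    have : {i | i ≠ j} = Set.univ \ {j} := by ext i; simp [Set.mem_diff]
    rw [← this] at hj
    have := Metric.infDist_zero_of_mem (s := (↑(Submodule.span ℝ (a '' {i | i ≠ j})) : Set (E n))) hj
    have := hle j
    linarith
  refine ⟨hli, fun w hw => ?_⟩
  obtain ⟨c, hc⟩ := (Submodule.mem_span_range_iff_exists_fun ℝ).mp hw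
  refine ⟨c, hc.symm, fun j => by rw [← hc]; exact key c j, fun c' hc' => ?_⟩
  have : ∑ i, (c' i - c i) • a i = 0 := by
    simp only [sub_smul, Finset.sum_sub_distrib]
    rw [hc, ← hc']; abel
  have := Fintype.linearIndependent_iff.mp hli _ this
  funext i; have := this i; linarith
end
end

section
/- Let A ⊆ ℝᵈ be a Borel set and ψ : A → ℝ a Lipschitz function. Then the d-dimensional Hausdorff measure of the graph gr ψ := {(x, ψ(x)) : x ∈ A} ⊆ ℝ^{d+1} satisfies H^d(gr ψ) ≤ (Lip(ψ) + 1) · H^d(A). -/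
open scoped RealInnerProductSpace
open MeasureTheory
open scoped NNReal ENNReal
open Module Filter Topology

set_option maxHeartbeats 1000000


noncomputable section

instance (d : ℕ) : MeasurableSpace (WithLp 2 (E d × ℝ)) := borel _

instance (d : ℕ) : BorelSpace (WithLp 2 (E d × ℝ)) := ⟨rfl⟩

def graphMap (d : ℕ) (v : E d) : E d →ₗ[ℝ] WithLp 2 (E d × ℝ) :=
  (WithLp.linearEquiv 2 ℝ (E d × ℝ)).symm.toLinearMap ∘ₗ
    LinearMap.prod LinearMap.id (innerSL ℝ v).toLinearMap

lemma graphMap_inner (d : ℕ) (v x y : E d) :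
    ⟪graphMap d v x, graphMap d v y⟫ = ⟪x, y⟫ + ⟪v, x⟫ * ⟪v, y⟫ := by
  rw [WithLp.prod_inner_apply]; norm_num [RCLike.inner_apply, graphMap]; ring

lemma graphMap_norm_sq (d : ℕ) (v z : E d) :
    ‖graphMap d v z‖ ^ 2 = ‖z‖ ^ 2 + ⟪v, z⟫ ^ 2 := by
  rw [← real_inner_self_eq_norm_sq, graphMap_inner, real_inner_self_eq_norm_sq]
  ring

lemma euclidean_hausdorff_eq_smul (d : ℕ) :
    ∃ c : ℝ≥0, (μH[(d:ℝ)] : Measure (E d)) = c • volume := by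
  have h : Measure.IsAddHaarMeasure (μH[(d:ℝ)] : Measure (E d)) := by
    have h2 : ((d:ℕ) : ℝ) = ((finrank ℝ (E d) : ℕ) : ℝ) := by
      simp [finrank_euclideanSpace_fin]
    rw [h2]; infer_instance
  haveI := h
  exact ⟨_, Measure.isAddLeftInvariant_eq_smul μH[(d:ℝ)] volume⟩

lemma hausdorff_image_graphMap_le (d : ℕ) (v : E d) (S : Set (E d)) :
    μH[(d:ℝ)] (graphMap d v '' S) ≤ ((1 + ‖v‖₊ : ℝ≥0) : ℝ≥0∞) * μH[(d:ℝ)] S := by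
  by_cases hv : v = 0
  · subst hv
    have hiso : Isometry (graphMap d 0) := by
      apply AddMonoidHomClass.isometry_of_norm
      intro x
      have h := graphMap_norm_sq d 0 x
      simp only [inner_zero_left] at h
      nlinarith [norm_nonneg (graphMap d 0 x), norm_nonneg x]
    rw [hiso.hausdorffMeasure_image (Or.inl (by positivity)) S]
    exact le_mul_of_one_le_left zero_le (by simp)
  · -- v ≠ 0
    have hd : 0 < d := by
      rcases Nat.eq_zero_or_pos d with h0 | h0
      · subst h0
        exact absurd (by ext i; exact i.elim0 : v = 0) hv
      · exact h0
    set i₀ : Fin d := ⟨0, hd⟩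
    have hvn : (0:ℝ) < ‖v‖ := norm_pos_iff.2 hv
    set w : E d := ‖v‖⁻¹ • v with hw_def
    have hw : ‖w‖ = 1 := norm_smul_inv_norm hv
    -- orthonormal basis with b i₀ = w
    have horth : Orthonormal ℝ (({i₀} : Set (Fin d)).restrict fun _ : Fin d => w) := by
      constructor
      · intro i; exact hw
      · intro i j hij
        exact absurd (Subtype.ext ((Set.mem_singleton_iff.1 i.2).trans
          (Set.mem_singleton_iff.1 j.2).symm)) hij
    obtain ⟨b, hb⟩ := horth.exists_orthonormalBasis_extension_of_card_eq
      (by simp [finrank_euclideanSpace_fin])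
    have hbi₀ : b i₀ = w := hb i₀ rfl
    set T := graphMap d v with hT
    have hvw : v = ‖v‖ • w := by
      rw [hw_def, smul_smul, mul_inv_cancel₀ hvn.ne', one_smul]
    have hvb : ∀ i, i ≠ i₀ → ⟪v, b i⟫ = 0 := by
      intro i hi
      rw [hvw, real_inner_smul_left, ← hbi₀, b.orthonormal.2 (Ne.symm hi), mul_zero]
    have hvw' : ⟪v, w⟫ = ‖v‖ := by
      nth_rewrite 1 [hvw]
      rw [real_inner_smul_left, real_inner_self_eq_norm_sq, hw]
      ring
    set a : ℝ := ‖T (b i₀)‖ with ha_def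
    have ha_sq : a ^ 2 = 1 + ‖v‖ ^ 2 := by
      rw [ha_def, graphMap_norm_sq, hbi₀, hw, hvw']
      ring
    have ha_pos : 0 < a := by nlinarith [norm_nonneg (T (b i₀)), norm_nonneg v]
    set u : Fin d → WithLp 2 (E d × ℝ) :=
      fun i => if i = i₀ then a⁻¹ • T (b i₀) else T (b i) with hu_def
    have hTnorm1 : ∀ i, i ≠ i₀ → ‖T (b i)‖ = 1 := by
      intro i hi
      have h := graphMap_norm_sq d v (b i)
      rw [hvb i hi, b.orthonormal.1 i] at h
      nlinarith [norm_nonneg (T (b i))]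
    have hu : Orthonormal ℝ u := by
      constructor
      · intro i
        by_cases hi : i = i₀
        · subst hi
          simp only [hu_def, if_pos rfl]
          rw [norm_smul, Real.norm_eq_abs, abs_of_pos (inv_pos.2 ha_pos), ← ha_def,
            inv_mul_cancel₀ ha_pos.ne']
        · simp only [hu_def, if_neg hi]
          exact hTnorm1 i hi
      · intro i j hij
        have key : ∀ i j : Fin d, i ≠ j → j ≠ i₀ → ⟪T (b i), T (b j)⟫ = 0 := by
          intro i j hij hj
          rw [graphMap_inner, b.orthonormal.2 hij, hvb j hj, mul_zero, add_zero]
        by_cases hj : j = i₀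
        · subst hj
          have hi : i ≠ i₀ := hij
          simp only [hu_def, if_pos rfl, if_neg hi]
          rw [real_inner_smul_right]
          rw [show ⟪T (b i), T (b i₀)⟫ = 0 from by
            rw [← inner_conj_symm]
            simp [key i₀ i (Ne.symm hij) hi]]
          ring
        · by_cases hi : i = i₀
          · subst hi
            simp only [hu_def, if_pos rfl, if_neg hj]
            rw [real_inner_smul_left, key i₀ j (Ne.symm hj) hj, mul_zero]
          · simp only [hu_def, if_neg hi, if_neg hj]
            exact key i j hij hj
    set L : E d →ₗ[ℝ] WithLp 2 (E d × ℝ) := (b.toBasis.constr ℝ) u with hL_def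
    have hLb : ∀ i, L (b i) = u i := by
      intro i
      have := b.toBasis.constr_basis ℝ u i
      rwa [show b.toBasis i = b i from by rw [b.coe_toBasis]] at this
    have hLorth : Orthonormal ℝ (⇑L ∘ ⇑b.toBasis) := by
      have : ⇑L ∘ ⇑b.toBasis = u := by
        funext i
        simp only [Function.comp_apply]
        rw [show b.toBasis i = b i from by rw [b.coe_toBasis], hLb]
      rw [this]; exact hu
    have hbortho : Orthonormal ℝ ⇑b.toBasis := by rw [b.coe_toBasis]; exact b.orthonormal
    have hLiso : Isometry ⇑L := by
      have h := (L.isometryOfOrthonormal hbortho hLorth).isometry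
      rwa [LinearMap.coe_isometryOfOrthonormal] at h
    set g : Fin d → ℝ := fun i => if i = i₀ then a else 1 with hg_def
    set D : E d →ₗ[ℝ] E d := Matrix.toLin b.toBasis b.toBasis (Matrix.diagonal g) with hD_def
    have hdet : LinearMap.det D = a := by
      rw [hD_def, LinearMap.det_toLin, Matrix.det_diagonal]
      simp [hg_def]
    have hDb : ∀ j, D (b.toBasis j) = g j • b.toBasis j := by
      intro j
      rw [hD_def, Matrix.toLin_self]
      rw [Finset.sum_eq_single j]
      · rw [Matrix.diagonal_apply_eq]
      · intro i _ hij
        rw [Matrix.diagonal_apply_ne _ hij, zero_smul]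
      · intro h; exact absurd (Finset.mem_univ j) h
    have hTLD : T = L ∘ₗ D := by
      apply b.toBasis.ext
      intro j
      rw [LinearMap.comp_apply, hDb, _root_.map_smul]
      rw [show b.toBasis j = b j from by rw [b.coe_toBasis], hLb]
      by_cases hj : j = i₀
      · subst hj
        simp only [hu_def, hg_def, if_pos rfl]
        rw [smul_smul, mul_inv_cancel₀ ha_pos.ne', one_smul]
      · simp only [hu_def, hg_def, if_neg hj, one_smul]
    have himg : T '' S = ⇑L '' (⇑D '' S) := by
      rw [← Set.image_comp, ← LinearMap.coe_comp, ← hTLD]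
    rw [himg, hLiso.hausdorffMeasure_image (Or.inl (by positivity)) _]
    obtain ⟨c, hc⟩ := euclidean_hausdorff_eq_smul d
    rw [hc]
    simp only [Measure.smul_apply, smul_eq_mul, ENNReal.smul_def]
    rw [Measure.addHaar_image_linearMap volume D S, hdet, abs_of_pos ha_pos]
    have haa : ENNReal.ofReal a ≤ ((1 + ‖v‖₊ : ℝ≥0) : ℝ≥0∞) := by
      have h1 : a ≤ 1 + ‖v‖ := by nlinarith [ha_sq, norm_nonneg v, ha_pos.le]
      calc ENNReal.ofReal a ≤ ENNReal.ofReal (1 + ‖v‖) := ENNReal.ofReal_le_ofReal h1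
        _ = ((1 + ‖v‖₊ : ℝ≥0) : ℝ≥0∞) := by
          rw [ENNReal.ofReal_add zero_le_one (norm_nonneg v), ENNReal.ofReal_one,
            ofReal_norm, enorm_eq_nnnorm]
          push_cast
          ring
    calc (c : ℝ≥0∞) * (ENNReal.ofReal a * volume S)
        = ENNReal.ofReal a * ((c : ℝ≥0∞) * volume S) := by ring
      _ ≤ ((1 + ‖v‖₊ : ℝ≥0) : ℝ≥0∞) * ((c : ℝ≥0∞) * volume S) :=
          mul_le_mul_left haa _

/-- For a Borel `A ⊆ ℝᵈ` and `ψ : A → ℝ` Lipschitz, the `d`-dimensional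
Hausdorff measure of the graph of `ψ` (in `ℝ^{d+1}` with the Euclidean metric, modelled
as the `L²` product of `E d` and `ℝ`) is at most `(Lip ψ + 1) · H^d(A)`. -/
theorem stmt_6 (d : ℕ) (A : Set (E d)) (hA : MeasurableSet A)
    (ψ : E d → ℝ) (K : NNReal) (hψ : LipschitzOnWith K ψ A) :
    μH[(d : ℝ)] {p : WithLp 2 (E d × ℝ) |
        (WithLp.equiv 2 (E d × ℝ) p).1 ∈ A ∧
        (WithLp.equiv 2 (E d × ℝ) p).2 = ψ (WithLp.equiv 2 (E d × ℝ) p).1} ≤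
      ((K : ENNReal) + 1) * μH[(d : ℝ)] A := by
  classical
  obtain ⟨φ, hφK, hφeq⟩ := hψ.extend_real
  set f : E d → WithLp 2 (E d × ℝ) := fun x => (WithLp.equiv 2 (E d × ℝ)).symm (x, φ x)
    with hf_def
  have hG : {p : WithLp 2 (E d × ℝ) |
      (WithLp.equiv 2 (E d × ℝ) p).1 ∈ A ∧
      (WithLp.equiv 2 (E d × ℝ) p).2 = ψ (WithLp.equiv 2 (E d × ℝ) p).1} = f '' A := by
    ext p
    simp only [Set.mem_setOf_eq, Set.mem_image]
    constructor
    · rintro ⟨h1, h2⟩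
      refine ⟨(WithLp.equiv 2 (E d × ℝ) p).1, h1, ?_⟩
      rw [hf_def]
      dsimp only
      rw [← hφeq h1, ← h2]
      exact (WithLp.equiv 2 (E d × ℝ)).symm_apply_apply p
    · rintro ⟨x, hx, rfl⟩
      refine ⟨?_, ?_⟩
      · simpa [hf_def] using hx
      · simp [hf_def, (hφeq hx).symm]
  have hpnorm : ∀ (z : E d) (t : ℝ),
      ‖((WithLp.equiv 2 (E d × ℝ)).symm (z, t))‖ ^ 2 = ‖z‖ ^ 2 + t ^ 2 := by
    intro z t
    rw [WithLp.prod_norm_sq_eq_of_L2]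
    simp [Real.norm_eq_abs, sq_abs]
  have hfsub : ∀ x y : E d,
      f x - f y = (WithLp.equiv 2 (E d × ℝ)).symm (x - y, φ x - φ y) := by
    intro x y
    rw [hf_def]
    dsimp only
    rfl
  have hfL : LipschitzWith (K + 1) f := by
    apply LipschitzWith.of_dist_le_mul
    intro x y
    rw [dist_eq_norm, hfsub, dist_eq_norm]
    have h1 : |φ x - φ y| ≤ (K : ℝ) * ‖x - y‖ := by
      have := hφK.dist_le_mul x y
      rwa [Real.dist_eq, dist_eq_norm] at this
    have h2 := hpnorm (x - y) (φ x - φ y)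
    have h3 : (0:ℝ) ≤ (K : ℝ) := K.coe_nonneg
    have h4 := norm_nonneg ((WithLp.equiv 2 (E d × ℝ)).symm (x - y, φ x - φ y))
    have h5 := norm_nonneg (x - y)
    have h6 : ((K + 1 : ℝ≥0) : ℝ) = (K : ℝ) + 1 := by push_cast; ring
    rw [h6]
    nlinarith [sq_abs (φ x - φ y), abs_nonneg (φ x - φ y)]
  obtain ⟨c, hc⟩ := euclidean_hausdorff_eq_smul d
  set s : Set (E d) := {x | DifferentiableAt ℝ φ x} with hs_def
  have hs_meas : MeasurableSet s := measurableSet_of_differentiableAt ℝ φ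
  have hs_vol : volume sᶜ = 0 := by
    have h := hφK.ae_differentiableAt (μ := (volume : Measure (E d)))
    rw [ae_iff] at h
    convert h using 2
    rfl
  have hμH_null : μH[(d:ℝ)] (A \ s) = 0 := by
    rw [hc]
    simp only [Measure.smul_apply, ENNReal.smul_def, smul_eq_mul]
    rw [measure_mono_null (Set.diff_subset_compl A s) hs_vol, mul_zero]
  have key : ∀ ε : ℝ≥0, ε ≠ 0 →
      μH[(d:ℝ)] (f '' A) ≤
        ((1 + ε : ℝ≥0) : ℝ≥0∞) ^ (d:ℝ) * (((K:ℝ≥0∞) + 1) * μH[(d:ℝ)] A) := by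
    intro ε hε
    obtain ⟨t, LL, t_disj, t_meas, t_cover, t_approx, t_deriv⟩ :=
      exists_partition_approximatesLinearOn_of_hasFDerivWithinAt φ s (fderiv ℝ φ)
        (fun x hx => hx.hasFDerivAt.hasFDerivWithinAt) (fun _ => ε) (fun _ => hε)
    set B : ℕ → Set (E d) := fun n => A ∩ s ∩ t n with hB_def
    have hterm : ∀ n, μH[(d:ℝ)] (f '' B n) ≤
        ((1 + ε : ℝ≥0) : ℝ≥0∞) ^ (d:ℝ) * (((K:ℝ≥0∞) + 1) * μH[(d:ℝ)] (B n)) := by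
      intro n
      rcases Set.eq_empty_or_nonempty (B n) with hBe | hBne
      · simp [hBe]
      have hsne : s.Nonempty := ⟨hBne.choose, hBne.choose_spec.1.2⟩
      obtain ⟨y, hy, hLy⟩ := t_deriv hsne n
      set v : E d := (InnerProductSpace.toDual ℝ (E d)).symm (LL n) with hv_def
      have hvK : ‖v‖₊ ≤ K := by
        rw [← NNReal.coe_le_coe, coe_nnnorm]
        have hnv : ‖v‖ = ‖LL n‖ := LinearIsometryEquiv.norm_map _ _
        rw [hnv, hLy]
        exact norm_fderiv_le_of_lipschitz ℝ hφK
      have hvx : ∀ z : E d, ⟪v, z⟫ = LL n z := fun z => InnerProductSpace.toDual_symm_apply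
      set π : WithLp 2 (E d × ℝ) → E d := fun p => (WithLp.equiv 2 (E d × ℝ) p).1 with hπ_def
      have himg : f '' B n = (f ∘ π) '' (graphMap d v '' B n) := by
        rw [Set.image_image]
        rfl
      have hTlip : LipschitzOnWith (1 + ε) (f ∘ π) (graphMap d v '' B n) := by
        apply LipschitzOnWith.of_dist_le_mul
        rintro p ⟨x, hx, rfl⟩ q ⟨y', hy', rfl⟩
        have hxs : x ∈ s ∩ t n := ⟨hx.1.2, hx.2⟩
        have hys : y' ∈ s ∩ t n := ⟨hy'.1.2, hy'.2⟩
        have happrox := t_approx n x hxs y' hys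
        show dist (f x) (f y') ≤ _
        rw [dist_eq_norm, dist_eq_norm, hfsub]
        have hTsub : graphMap d v x - graphMap d v y' =
            (WithLp.equiv 2 (E d × ℝ)).symm (x - y', LL n (x - y')) := by
          rw [← map_sub]
          show (WithLp.equiv 2 (E d × ℝ)).symm (x - y', ⟪v, x - y'⟫) = _
          rw [hvx]
        have e1 : ‖x - y'‖ ≤ ‖graphMap d v x - graphMap d v y'‖ := by
          have h := hpnorm (x - y') (LL n (x - y'))
          rw [← hTsub] at h
          nlinarith [norm_nonneg (graphMap d v x - graphMap d v y'), norm_nonneg (x - y'),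
            sq_nonneg (LL n (x - y'))]
        have hdiff : (WithLp.equiv 2 (E d × ℝ)).symm (x - y', φ x - φ y') -
            (graphMap d v x - graphMap d v y') =
            (WithLp.equiv 2 (E d × ℝ)).symm (0, φ x - φ y' - LL n (x - y')) := by
          rw [hTsub]
          show (WithLp.equiv 2 (E d × ℝ)).symm ((x - y', φ x - φ y') - (x - y', LL n (x - y'))) = _
          rw [Prod.mk_sub_mk, sub_self]
        have e2 : ‖(WithLp.equiv 2 (E d × ℝ)).symm (x - y', φ x - φ y') -
            (graphMap d v x - graphMap d v y')‖ ≤ (ε : ℝ) * ‖x - y'‖ := by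
          rw [hdiff]
          have h := hpnorm 0 (φ x - φ y' - LL n (x - y'))
          have h7 := norm_nonneg
            ((WithLp.equiv 2 (E d × ℝ)).symm ((0 : E d), φ x - φ y' - LL n (x - y')))
          have h8 : (0:ℝ) ≤ (ε : ℝ) * ‖x - y'‖ := by positivity
          rw [Real.norm_eq_abs] at happrox
          have h11 : ‖(WithLp.equiv 2 (E d × ℝ)).symm ((0:E d), φ x - φ y' - LL n (x - y'))‖ ^ 2
              ≤ ((ε : ℝ) * ‖x - y'‖) ^ 2 := by
            rw [h]
            simp only [norm_zero]
            nlinarith [sq_abs (φ x - φ y' - LL n (x - y')),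
              abs_nonneg (φ x - φ y' - LL n (x - y'))]
          nlinarith [h11, h7, h8]
        have etotal : ‖(WithLp.equiv 2 (E d × ℝ)).symm (x - y', φ x - φ y')‖ ≤
            ‖graphMap d v x - graphMap d v y'‖ + (ε : ℝ) * ‖x - y'‖ := by
          have hsplit2 : (WithLp.equiv 2 (E d × ℝ)).symm (x - y', φ x - φ y') =
              (graphMap d v x - graphMap d v y') +
              ((WithLp.equiv 2 (E d × ℝ)).symm (x - y', φ x - φ y') -
                (graphMap d v x - graphMap d v y')) := by abel
          rw [hsplit2]
          exact (norm_add_le _ _).trans (by gcongr)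
        have h9 : ((1 + ε : ℝ≥0) : ℝ) = 1 + (ε : ℝ) := by push_cast; ring
        rw [h9]
        have h10 : (0:ℝ) ≤ (ε:ℝ) := ε.coe_nonneg
        nlinarith [mul_le_mul_of_nonneg_left e1 h10]
      calc μH[(d:ℝ)] (f '' B n)
          = μH[(d:ℝ)] ((f ∘ π) '' (graphMap d v '' B n)) := by rw [himg]
        _ ≤ ((1 + ε : ℝ≥0) : ℝ≥0∞) ^ (d:ℝ) * μH[(d:ℝ)] (graphMap d v '' B n) :=
            hTlip.hausdorffMeasure_image_le (by positivity)
        _ ≤ ((1 + ε : ℝ≥0) : ℝ≥0∞) ^ (d:ℝ) *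
              (((1 + ‖v‖₊ : ℝ≥0) : ℝ≥0∞) * μH[(d:ℝ)] (B n)) :=
            mul_le_mul_right (hausdorff_image_graphMap_le d v (B n)) _
        _ ≤ _ := by
            refine mul_le_mul_right (mul_le_mul_left ?_ _) _
            rw [show ((1 + ‖v‖₊ : ℝ≥0) : ℝ≥0∞) = (‖v‖₊ : ℝ≥0∞) + 1 by push_cast; ring]
            exact add_le_add_left (ENNReal.coe_le_coe.2 hvK) 1
    have hsplit : f '' A ⊆ f '' (A \ s) ∪ ⋃ n, f '' B n := by
      rintro _ ⟨x, hx, rfl⟩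
      by_cases hxs : x ∈ s
      · obtain ⟨n, hn⟩ := Set.mem_iUnion.1 (t_cover hxs)
        exact Or.inr (Set.mem_iUnion.2 ⟨n, Set.mem_image_of_mem f ⟨⟨hx, hxs⟩, hn⟩⟩)
      · exact Or.inl (Set.mem_image_of_mem f ⟨hx, hxs⟩)
    have h0 : μH[(d:ℝ)] (f '' (A \ s)) = 0 := by
      have h := hfL.hausdorffMeasure_image_le (by positivity : (0:ℝ) ≤ (d:ℝ)) (A \ s)
      rw [hμH_null, mul_zero] at h
      exact le_antisymm h zero_le
    have hsum : ∑' n, μH[(d:ℝ)] (B n) ≤ μH[(d:ℝ)] A := by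
      have hmeas : ∀ n, MeasurableSet (B n) := fun n => (hA.inter hs_meas).inter (t_meas n)
      have hdisj : Pairwise (Function.onFun Disjoint B) := fun m n hmn =>
        ((t_disj hmn).mono Set.inter_subset_right Set.inter_subset_right)
      rw [← measure_iUnion hdisj hmeas]
      exact measure_mono (Set.iUnion_subset fun n =>
        Set.inter_subset_left.trans Set.inter_subset_left)
    calc μH[(d:ℝ)] (f '' A)
        ≤ μH[(d:ℝ)] (f '' (A \ s) ∪ ⋃ n, f '' B n) := measure_mono hsplit
      _ ≤ μH[(d:ℝ)] (f '' (A \ s)) + μH[(d:ℝ)] (⋃ n, f '' B n) := measure_union_le _ _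
      _ ≤ 0 + ∑' n, μH[(d:ℝ)] (f '' B n) := by
          rw [h0]
          exact add_le_add_right (measure_iUnion_le _) 0
      _ = ∑' n, μH[(d:ℝ)] (f '' B n) := zero_add _
      _ ≤ ∑' n, ((1 + ε : ℝ≥0) : ℝ≥0∞) ^ (d:ℝ) * (((K:ℝ≥0∞) + 1) * μH[(d:ℝ)] (B n)) :=
          ENNReal.tsum_le_tsum hterm
      _ = ((1 + ε : ℝ≥0) : ℝ≥0∞) ^ (d:ℝ) * (((K:ℝ≥0∞) + 1) * ∑' n, μH[(d:ℝ)] (B n)) := by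
          rw [ENNReal.tsum_mul_left, ENNReal.tsum_mul_left]
      _ ≤ _ := mul_le_mul_right (mul_le_mul_right hsum _) _
  rw [hG]
  have hseq : ∀ m : ℕ, μH[(d:ℝ)] (f '' A) ≤
      ((1 + ((m:ℝ≥0) + 1)⁻¹ : ℝ≥0) : ℝ≥0∞) ^ (d:ℝ) * (((K:ℝ≥0∞) + 1) * μH[(d:ℝ)] A) :=
    fun m => key _ (inv_ne_zero (by positivity))
  have h1 : Tendsto (fun m : ℕ => (1 + ((m:ℝ≥0) + 1)⁻¹ : ℝ≥0)) atTop (𝓝 1) := by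
    rw [← NNReal.tendsto_coe, NNReal.coe_one]
    have h' := tendsto_one_div_add_atTop_nhds_zero_nat (𝕜 := ℝ)
    have h'' : Tendsto (fun _ : ℕ => (1:ℝ)) atTop (𝓝 1) := tendsto_const_nhds
    have := h''.add h'
    rw [add_zero] at this
    convert this using 2 with m
    push_cast
    rw [one_div]
  have h2 : Tendsto (fun m : ℕ => ((1 + ((m:ℝ≥0) + 1)⁻¹ : ℝ≥0) : ℝ≥0∞)) atTop (𝓝 1) := by
    rw [show (1:ℝ≥0∞) = ((1:ℝ≥0):ℝ≥0∞) from rfl]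
    exact ENNReal.tendsto_coe.2 h1
  have h3 : Tendsto (fun m : ℕ =>
      ((1 + ((m:ℝ≥0) + 1)⁻¹ : ℝ≥0) : ℝ≥0∞) ^ (d:ℝ)) atTop (𝓝 1) := by
    have h := ENNReal.Tendsto.pow (n := d) h2
    rw [one_pow] at h
    simpa only [ENNReal.rpow_natCast] using h
  have hlim := ENNReal.Tendsto.mul_const h3 (Or.inl one_ne_zero)
    (b := ((K:ℝ≥0∞) + 1) * μH[(d:ℝ)] A)
  rw [one_mul] at hlim
  exact ge_of_tendsto' hlim hseq
end
end

section
/- Let ℝⁿ ⊕ Λ²(ℝⁿ) carry an adequate scalar product with induced norm ‖·‖. There exists a constant K₁ > 0 (depending only on n) such that for every (n−1)-tuple (x₁,…,x_{n−1}) in ℝⁿ, every Y ∈ Λ²(ℝⁿ), and every ε > 0 with MinHeight(x₁,…,x_{n−1}) ≥ ε, there exist v₁,…,v_{n−1} ∈ ℝⁿ such that Y = Σ_{j=1}^{n−1} x_j ∧ v_j and ‖v_j‖ ≤ K₁ ‖Y‖ / ε for every j. -/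
open scoped RealInnerProductSpace
open MeasureTheory

set_option maxHeartbeats 1000000

noncomputable section

lemma toEL_apply {n : ℕ} (Y : Matrix (Fin n) (Fin n) ℝ) (a : E n) (i : Fin n) :
    (Matrix.toEuclideanLin Y a) i = ∑ l, Y i l * a l := by
  simp [Matrix.toEuclideanLin_apply, Matrix.mulVec, dotProduct]

lemma E_sum_apply' {ι : Type*} {n : ℕ} (s : Finset ι) (f : ι → E n) (i : Fin n) :
    (∑ k ∈ s, f k) i = ∑ k ∈ s, f k i := by
  classical
  refine Finset.induction_on s (by simp) ?_
  intro a t ha ih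
  rw [Finset.sum_insert ha, Finset.sum_insert ha, PiLp.add_apply, ih]

lemma E_sum_apply {ι : Type*} [Fintype ι] {n : ℕ} (f : ι → E n) (i : Fin n) :
    (∑ k, f k) i = ∑ k, f k i := E_sum_apply' _ f i

lemma toEL_bound {n : ℕ} (Y : Matrix (Fin n) (Fin n) ℝ) (a : E n) :
    ‖Matrix.toEuclideanLin Y a‖ ≤ Real.sqrt (∑ i, ∑ j, Y i j ^ 2) * ‖a‖ := by
  have hkey : ∑ i, (∑ l, Y i l * a l) ^ 2 ≤ (∑ i, ∑ j, Y i j ^ 2) * (∑ l, (a l) ^ 2) := by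
    rw [Finset.sum_mul]
    exact Finset.sum_le_sum fun i _ => Finset.sum_mul_sq_le_sq_mul_sq _ _ _
  have h1 : ‖Matrix.toEuclideanLin Y a‖ = Real.sqrt (∑ i, (∑ l, Y i l * a l) ^ 2) := by
    rw [EuclideanSpace.norm_eq]
    congr 1
    refine Finset.sum_congr rfl fun i _ => ?_
    rw [toEL_apply, Real.norm_eq_abs, sq_abs]
  have h2 : ‖a‖ = Real.sqrt (∑ l, (a l) ^ 2) := by
    rw [EuclideanSpace.norm_eq]
    congr 1
    exact Finset.sum_congr rfl fun l _ => by rw [Real.norm_eq_abs, sq_abs]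
  rw [h1, h2, ← Real.sqrt_mul (by positivity)]
  exact Real.sqrt_le_sqrt hkey

lemma key_sum {n m : ℕ} (x u : Fin m → Fin n → ℝ) (e z : Fin n → ℝ)
    (Y : Matrix (Fin n) (Fin n) ℝ)
    (hP : ∀ i l, ∑ k, x k i * u k l = (if i = l then (1:ℝ) else 0) - e i * e l)
    (hz : ∀ i, z i = ∑ l, Y i l * e l)
    (hze : ∑ l, e l * z l = 0)
    (i j : Fin n) :
    ∑ k, x k i * ((1/2)*((∑ l, u k l * z l) * e j - ∑ l, Y j l * u k l))
      = (1/2)*(z i * e j - Y j i + e i * z j) := by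
  have T1 : ∑ k, x k i * (∑ l, u k l * z l) = ∑ l, (∑ k, x k i * u k l) * z l := by
    calc ∑ k, x k i * (∑ l, u k l * z l)
        = ∑ k, ∑ l, x k i * (u k l * z l) := by
          exact Finset.sum_congr rfl fun k _ => Finset.mul_sum _ _ _
      _ = ∑ l, ∑ k, x k i * (u k l * z l) := Finset.sum_comm
      _ = ∑ l, (∑ k, x k i * u k l) * z l := by
          refine Finset.sum_congr rfl fun l _ => ?_
          rw [Finset.sum_mul]
          exact Finset.sum_congr rfl fun k _ => by ring
  have T1' : ∑ l, (∑ k, x k i * u k l) * z l = z i := by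
    have hterm : ∀ l : Fin n, (∑ k, x k i * u k l) * z l
        = (if i = l then (1:ℝ) else 0) * z l - e i * (e l * z l) := by
      intro l; rw [hP]; ring
    rw [Finset.sum_congr rfl fun l _ => hterm l, Finset.sum_sub_distrib, ← Finset.mul_sum, hze,
      mul_zero, sub_zero]
    simp
  have T2 : ∑ k, x k i * (∑ l, Y j l * u k l) = ∑ l, Y j l * (∑ k, x k i * u k l) := by
    calc ∑ k, x k i * (∑ l, Y j l * u k l)
        = ∑ k, ∑ l, x k i * (Y j l * u k l) := by
          exact Finset.sum_congr rfl fun k _ => Finset.mul_sum _ _ _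
      _ = ∑ l, ∑ k, x k i * (Y j l * u k l) := Finset.sum_comm
      _ = ∑ l, Y j l * (∑ k, x k i * u k l) := by
          refine Finset.sum_congr rfl fun l _ => ?_
          rw [Finset.mul_sum]
          exact Finset.sum_congr rfl fun k _ => by ring
  have T2' : ∑ l, Y j l * (∑ k, x k i * u k l) = Y j i - z j * e i := by
    have hterm : ∀ l : Fin n, Y j l * (∑ k, x k i * u k l)
        = Y j l * (if i = l then (1:ℝ) else 0) - (Y j l * e l) * e i := by
      intro l; rw [hP]; ring
    rw [Finset.sum_congr rfl fun l _ => hterm l, Finset.sum_sub_distrib, ← Finset.sum_mul, ← hz]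
    simp [eq_comm]
  have expand : ∑ k, x k i * ((1/2)*((∑ l, u k l * z l) * e j - ∑ l, Y j l * u k l))
      = (1/2) * ((∑ k, x k i * (∑ l, u k l * z l)) * e j - ∑ k, x k i * (∑ l, Y j l * u k l)) := by
    rw [eq_comm, Finset.sum_mul, ← Finset.sum_sub_distrib, Finset.mul_sum]
    exact Finset.sum_congr rfl fun k _ => by ring
  rw [expand, T1, T1', T2, T2']
  ring

theorem main_aux (m : ℕ) (x : Fin m → E (m+1)) (Y : Matrix (Fin (m+1)) (Fin (m+1)) ℝ)
    (hY : Y.transpose = -Y) (ε : ℝ) (hε : 0 < ε) (hmin : ε ≤ minHeight x) :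
    ∃ v : Fin m → E (m+1), Y = ∑ j, wedge (x j) (v j) ∧ ∀ j, ‖v j‖ ≤ 2 * normL Y / ε := by
  classical
  have hYskew : ∀ i j, Y j i = - Y i j := by
    intro i j
    have := congrFun (congrFun hY i) j
    simpa [Matrix.transpose_apply] using this
  have hdist : ∀ j, ε ≤ Metric.infDist (x j)
      (↑(Submodule.span ℝ (x '' {i | i ≠ j})) : Set (E (m+1))) := by
    intro j
    refine le_trans hmin (ciInf_le ⟨0, ?_⟩ j)
    rintro b ⟨j', rfl⟩
    exact Metric.infDist_nonneg
  set W : Submodule ℝ (E (m+1)) := Submodule.span ℝ (Set.range x) with hW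
  have hWrank : Module.finrank ℝ W ≤ m := by
    refine le_trans (finrank_span_le_card _) ?_
    rw [Set.toFinset_range]
    exact le_trans Finset.card_image_le (by simp)
  have hWbot : Wᗮ ≠ ⊥ := by
    intro h
    rw [Submodule.orthogonal_eq_bot_iff] at h
    rw [h] at hWrank
    have : Module.finrank ℝ (⊤ : Submodule ℝ (E (m+1))) = m+1 := by
      rw [finrank_top, finrank_euclideanSpace_fin]
    omega
  obtain ⟨v0, hv0W, hv0⟩ := (Submodule.ne_bot_iff _).mp hWbot
  set e : E (m+1) := (‖v0‖⁻¹ : ℝ) • v0 with he_def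
  have heW : e ∈ Wᗮ := Submodule.smul_mem _ _ hv0W
  have he1 : ‖e‖ = 1 := by
    rw [he_def, norm_smul, norm_inv, norm_norm, inv_mul_cancel₀ (norm_ne_zero_iff.mpr hv0)]
  have hex : ∀ j, ⟪x j, e⟫ = 0 := fun j =>
    (Submodule.mem_orthogonal W e).mp heW (x j) (Submodule.subset_span ⟨j, rfl⟩)
  have hee : ⟪e, e⟫ = (1:ℝ) := by rw [real_inner_self_eq_norm_sq, he1]; norm_num
  -- the subspaces and dual vectors
  set V : Fin m → Submodule ℝ (E (m+1)) :=
    fun j => Submodule.span ℝ (x '' {i | i ≠ j}) ⊔ (ℝ ∙ e) with hVdef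
  have hspanW : ∀ j, Submodule.span ℝ (x '' {i | i ≠ j}) ≤ W :=
    fun j => Submodule.span_mono (by rintro _ ⟨i, _, rfl⟩; exact ⟨i, rfl⟩)
  set h : Fin m → E (m+1) := fun j => x j - (Submodule.orthogonalProjection (V j) (x j) : E (m+1)) with hhdef
  have hhmem : ∀ j, h j ∈ (V j)ᗮ := fun j => Submodule.sub_starProjection_mem_orthogonal (K := V j) (x j)
  have hhnorm : ∀ j, ε ≤ ‖h j‖ := by
    intro j
    have hpmem : (Submodule.orthogonalProjection (V j) (x j) : E (m+1)) ∈ V j := SetLike.coe_mem _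
    obtain ⟨a, ha, b, hb, hab⟩ := Submodule.mem_sup.mp hpmem
    obtain ⟨t, rfl⟩ := Submodule.mem_span_singleton.mp hb
    have hxa_e : ⟪x j - a, e⟫ = 0 := by
      have hxW : x j ∈ W := Submodule.subset_span ⟨j, rfl⟩
      have haW : a ∈ W := hspanW j ha
      exact (Submodule.mem_orthogonal W e).mp heW _ (Submodule.sub_mem _ hxW haW)
    have hhj : h j = (x j - a) - t • e := by
      rw [hhdef]; simp only; rw [← hab]; abel
    have hsq : ‖h j‖^2 = ‖x j - a‖^2 + t^2 := by
      rw [hhj, norm_sub_sq_real, real_inner_smul_right, hxa_e, mul_zero, mul_zero, norm_smul,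
        he1, mul_one, Real.norm_eq_abs, sq_abs]
      ring
    have h1 : ε ≤ ‖x j - a‖ := by
      refine le_trans (hdist j) ?_
      have := Metric.infDist_le_dist_of_mem (x := x j) ha
      rwa [dist_eq_norm] at this
    nlinarith [norm_nonneg (h j), norm_nonneg (x j - a)]
  have hhne : ∀ j, ‖h j‖ ≠ 0 := fun j => ne_of_gt (lt_of_lt_of_le hε (hhnorm j))
  set u : Fin m → E (m+1) := fun j => ((‖h j‖^2)⁻¹ : ℝ) • h j with hudef
  have hperp : ∀ k, ∀ w ∈ V k, ⟪h k, w⟫ = (0:ℝ) := by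
    intro k w hw
    rw [real_inner_comm]
    exact (Submodule.mem_orthogonal (V k) (h k)).mp (hhmem k) w hw
  have hux : ∀ k j, ⟪u k, x j⟫ = if k = j then (1:ℝ) else 0 := by
    intro k j
    rw [hudef]; simp only
    rw [real_inner_smul_left]
    by_cases hkj : k = j
    · subst hkj
      have hxk : x k = h k + (Submodule.orthogonalProjection (V k) (x k) : E (m+1)) := by
        rw [hhdef]; simp only; abel
      rw [if_pos rfl, hxk, inner_add_right,
        hperp k _ (SetLike.coe_mem (Submodule.orthogonalProjection (V k) (x k))),
        real_inner_self_eq_norm_sq, add_zero, inv_mul_cancel₀ (pow_ne_zero 2 (hhne k))]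
    · have hxV : x j ∈ V k :=
        Submodule.mem_sup_left (Submodule.subset_span ⟨j, fun hjk => hkj hjk.symm, rfl⟩)
      rw [if_neg hkj, hperp k _ hxV, mul_zero]
  have hue : ∀ k, ⟪u k, e⟫ = (0:ℝ) := by
    intro k
    rw [hudef]; simp only
    rw [real_inner_smul_left,
      hperp k e (Submodule.mem_sup_right (Submodule.mem_span_singleton_self e)), mul_zero]
  have hunorm : ∀ k, ‖u k‖ ≤ ε⁻¹ := by
    intro k
    rw [hudef]; simp only
    rw [norm_smul, Real.norm_eq_abs, abs_inv, abs_pow, sq_abs]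
    have : (‖h k‖^2)⁻¹ * ‖h k‖ = ‖h k‖⁻¹ := by
      rw [sq, mul_inv, mul_assoc, inv_mul_cancel₀ (hhne k), mul_one]
    rw [this]
    exact inv_anti₀ hε (hhnorm k)
  -- linear independence and spanning of (u, e)
  have hF : LinearIndependent ℝ (Fin.snoc u e : Fin (m+1) → E (m+1)) := by
    rw [Fintype.linearIndependent_iff]
    intro g hg
    rw [Fin.sum_univ_castSucc] at hg
    simp only [Fin.snoc_castSucc, Fin.snoc_last] at hg
    have hglast : g (Fin.last m) = 0 := by
      have h0 : ⟪(∑ k : Fin m, g k.castSucc • u k) + g (Fin.last m) • e, e⟫ = (0:ℝ) := by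
        rw [hg, inner_zero_left]
      rw [inner_add_left, sum_inner] at h0
      simp only [real_inner_smul_left, hue, mul_zero, Finset.sum_const_zero, hee, mul_one,
        zero_add] at h0
      exact h0
    intro i
    refine Fin.lastCases hglast (fun j => ?_) i
    have h1 : ⟪(∑ k : Fin m, g k.castSucc • u k) + g (Fin.last m) • e, x j⟫ = (0:ℝ) := by
      rw [hg, inner_zero_left]
    have hexj : ⟪e, x j⟫ = (0:ℝ) := by rw [real_inner_comm]; exact hex j
    rw [inner_add_left, sum_inner] at h1
    simp only [real_inner_smul_left, hux, hexj, mul_zero, add_zero, mul_ite, mul_one,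
      Finset.sum_ite_eq', Finset.mem_univ, if_true] at h1
    exact h1
  have hFtop : Submodule.span ℝ (Set.range (Fin.snoc u e : Fin (m+1) → E (m+1))) = ⊤ :=
    hF.span_eq_top_of_card_eq_finrank (by simp [finrank_euclideanSpace_fin])
  have hdecomp : ∀ w : E (m+1), (∑ k, ⟪u k, w⟫ • x k) + ⟪e, w⟫ • e = w := by
    intro w
    have key : w - ((∑ k, ⟪u k, w⟫ • x k) + ⟪e, w⟫ • e) = 0 := by
      set r : E (m+1) := w - ((∑ k, ⟪u k, w⟫ • x k) + ⟪e, w⟫ • e) with hrdef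
      have hru : ∀ k, ⟪u k, r⟫ = (0:ℝ) := by
        intro k
        rw [hrdef, inner_sub_right, inner_add_right, inner_sum]
        simp only [real_inner_smul_right, hux, hue, mul_zero, add_zero, mul_ite, mul_one,
          Finset.sum_ite_eq, Finset.mem_univ, if_true]
        ring
      have hre : ⟪e, r⟫ = (0:ℝ) := by
        rw [hrdef, inner_sub_right, inner_add_right, inner_sum]
        have hexk : ∀ k : Fin m, ⟪e, x k⟫ = (0:ℝ) := fun k => by
          rw [real_inner_comm]; exact hex k
        simp only [real_inner_smul_right, hexk, hee, mul_zero, mul_one, Finset.sum_const_zero]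
        ring
      have hmem : r ∈ Submodule.span ℝ (Set.range (Fin.snoc u e : Fin (m+1) → E (m+1))) := by
        rw [hFtop]; trivial
      obtain ⟨c, hc⟩ := (Submodule.mem_span_range_iff_exists_fun ℝ).mp hmem
      have hrr : ⟪r, r⟫ = (0:ℝ) := by
        have hs := sum_inner (𝕜 := ℝ) Finset.univ
          (fun i => c i • (Fin.snoc u e : Fin (m+1) → E (m+1)) i) r
        rw [hc] at hs
        rw [hs]
        refine Finset.sum_eq_zero fun i _ => ?_
        rw [real_inner_smul_left]
        refine mul_eq_zero_of_right _ ?_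
        refine Fin.lastCases ?_ (fun j => ?_) i
        · rw [Fin.snoc_last]; exact hre
        · rw [Fin.snoc_castSucc]; exact hru j
      exact inner_self_eq_zero.mp hrr
    have := sub_eq_zero.mp key
    exact this.symm
  -- entrywise form of the decomposition
  have hP : ∀ i l, ∑ k, x k i * u k l = (if i = l then (1:ℝ) else 0) - e i * e l := by
    intro i l
    have hw := hdecomp (EuclideanSpace.single l 1)
    have hwi := congrArg (fun w : E (m+1) => w i) hw
    have hsingle : ∀ a : E (m+1), ⟪a, EuclideanSpace.single l (1:ℝ)⟫ = a l := by
      intro a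
      rw [PiLp.inner_apply]
      simp [EuclideanSpace.single_apply]
    rw [PiLp.add_apply, E_sum_apply, PiLp.smul_apply, smul_eq_mul, hsingle] at hwi
    simp only [PiLp.smul_apply, smul_eq_mul, hsingle] at hwi
    rw [EuclideanSpace.single_apply] at hwi
    have : ∑ k, x k i * u k l = ∑ k, u k l * x k i :=
      Finset.sum_congr rfl fun k _ => mul_comm _ _
    rw [this]
    have hie : e i * e l = e l * e i := mul_comm _ _
    rw [hie]
    linarith [hwi]
  -- the vector z = Y e and the v's
  set z : E (m+1) := Matrix.toEuclideanLin Y e with hzdef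
  have hzi : ∀ i, z i = ∑ l, Y i l * e l := fun i => toEL_apply Y e i
  have hze : ∑ l, e l * z l = 0 := by
    have h1 : ∑ l, e l * z l = ∑ l, ∑ j, e l * (Y l j * e j) := by
      refine Finset.sum_congr rfl fun l _ => ?_
      rw [hzi, Finset.mul_sum]
    have h2 : ∑ l, ∑ j, e l * (Y l j * e j) = - ∑ l, ∑ j, e l * (Y l j * e j) := by
      conv_lhs => rw [Finset.sum_comm]
      rw [← Finset.sum_neg_distrib]
      refine Finset.sum_congr rfl fun a _ => ?_
      rw [← Finset.sum_neg_distrib]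
      refine Finset.sum_congr rfl fun b _ => ?_
      rw [hYskew a b]
      ring
    rw [h1]
    linarith [h2]
  set v : Fin m → E (m+1) :=
    fun k => (1/2 : ℝ) • ((⟪u k, z⟫ : ℝ) • e - Matrix.toEuclideanLin Y (u k)) with hvdef
  have hinner_uz : ∀ k, (⟪u k, z⟫ : ℝ) = ∑ l, u k l * z l := by
    intro k
    rw [PiLp.inner_apply]
    simp
    exact Finset.sum_congr rfl fun _ _ => mul_comm _ _
  have hvi : ∀ k i, v k i = (1/2)*((∑ l, u k l * z l) * e i - ∑ l, Y i l * u k l) := by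
    intro k i
    rw [hvdef]; simp only
    rw [PiLp.smul_apply, PiLp.sub_apply, PiLp.smul_apply, smul_eq_mul, smul_eq_mul, toEL_apply,
      hinner_uz]
  refine ⟨v, ?_, ?_⟩
  · apply Matrix.ext
    intro i j
    have hsum : (∑ k, wedge (x k) (v k)) i j = ∑ k, (x k i * v k j - v k i * x k j) := by
      simp [wedge, Matrix.sum_apply]
    rw [hsum, Finset.sum_sub_distrib]
    have e1 : ∑ k, x k i * v k j = (1/2)*(z i * e j - Y j i + e i * z j) := by
      have hk := key_sum (fun k => (x k : Fin (m+1) → ℝ)) (fun k => (u k : Fin (m+1) → ℝ)) e z Y hP hzi hze i j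
      rw [← hk]
      exact Finset.sum_congr rfl fun k _ => by rw [hvi]
    have e2 : ∑ k, v k i * x k j = (1/2)*(z j * e i - Y i j + e j * z i) := by
      have hk := key_sum (fun k => (x k : Fin (m+1) → ℝ)) (fun k => (u k : Fin (m+1) → ℝ)) e z Y hP hzi hze j i
      rw [← hk]
      refine Finset.sum_congr rfl fun k _ => ?_
      rw [hvi]
      ring
    rw [e1, e2, hYskew i j]
    ring
  · intro k
    set S : ℝ := ∑ i, ∑ j, Y i j ^ 2 with hSdef
    have hS0 : (0:ℝ) ≤ S := by positivity
    have hF0 : (0:ℝ) ≤ Real.sqrt S := Real.sqrt_nonneg _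
    have hz_norm : ‖z‖ ≤ Real.sqrt S := by
      have := toEL_bound Y e
      rwa [he1, mul_one] at this
    have hTu : ‖Matrix.toEuclideanLin Y (u k)‖ ≤ Real.sqrt S * ‖u k‖ := toEL_bound Y (u k)
    have hβ : |(⟪u k, z⟫ : ℝ)| ≤ ‖u k‖ * Real.sqrt S := by
      refine le_trans (abs_real_inner_le_norm _ _) ?_
      exact mul_le_mul_of_nonneg_left hz_norm (norm_nonneg _)
    have hnv : ‖v k‖ ≤ Real.sqrt S * ‖u k‖ := by
      rw [hvdef]; simp only
      rw [norm_smul]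
      have htri : ‖(⟪u k, z⟫ : ℝ) • e - Matrix.toEuclideanLin Y (u k)‖
          ≤ |(⟪u k, z⟫ : ℝ)| * ‖e‖ + ‖Matrix.toEuclideanLin Y (u k)‖ := by
        refine le_trans (norm_sub_le _ _) ?_
        rw [norm_smul, Real.norm_eq_abs]
      rw [Real.norm_eq_abs]
      have : |(1:ℝ)/2| = 1/2 := by norm_num
      rw [this]
      rw [he1, mul_one] at htri
      nlinarith [norm_nonneg (u k)]
    have hFnorm : Real.sqrt S ≤ 2 * normL Y := by
      have hnormL : normL Y = Real.sqrt ((1/2) * S) := by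
        rw [normL, innerL, hSdef]
        congr 2
        exact Finset.sum_congr rfl fun i _ => Finset.sum_congr rfl fun j _ => (sq (Y i j)).symm
      have h4 : Real.sqrt (4:ℝ) = 2 := by
        rw [show (4:ℝ) = 2^2 by norm_num, Real.sqrt_sq (by norm_num : (0:ℝ) ≤ 2)]
      have hle : Real.sqrt S ≤ Real.sqrt (4 * ((1/2)*S)) := Real.sqrt_le_sqrt (by nlinarith)
      rw [Real.sqrt_mul (by norm_num : (0:ℝ) ≤ 4), h4] at hle
      rw [hnormL]
      exact hle
    have hnormL0 : (0:ℝ) ≤ normL Y := Real.sqrt_nonneg _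
    calc ‖v k‖ ≤ Real.sqrt S * ‖u k‖ := hnv
      _ ≤ (2 * normL Y) * ε⁻¹ := by
          apply mul_le_mul hFnorm (hunorm k) (norm_nonneg _) (by positivity)
      _ = 2 * normL Y / ε := by rw [div_eq_mul_inv]

/-- there is `K₁ > 0` (depending only on `n`) such that every
`Y ∈ Λ²(ℝⁿ)` (a skew-symmetric matrix) can be written as `Y = Σⱼ xⱼ ∧ vⱼ` with
`‖vⱼ‖ ≤ K₁‖Y‖/ε`, whenever `MinHeight(x₁,…,x_{n-1}) ≥ ε > 0`. -/
theorem stmt_8 (n : ℕ) :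
    ∃ K₁ > (0 : ℝ), ∀ (x : Fin (n - 1) → E n) (Y : Matrix (Fin n) (Fin n) ℝ),
      Y.transpose = -Y → ∀ ε > (0 : ℝ), ε ≤ minHeight x →
      ∃ v : Fin (n - 1) → E n,
        Y = ∑ j, wedge (x j) (v j) ∧ ∀ j, ‖v j‖ ≤ K₁ * normL Y / ε := by
  refine ⟨2, two_pos, ?_⟩
  intro x Y hY ε hε hmin
  match n, x, Y, hY, hmin with
  | 0, x, Y, hY, hmin =>
    exact ⟨fun _ => 0, Matrix.ext fun i => Fin.elim0 i, fun j => Fin.elim0 j⟩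
  | (m+1), x, Y, hY, hmin =>
    exact main_aux m x Y hY ε hε hmin
end
end

section
/- Let G be a sub-Finsler free Carnot group of step 2 and rank n with adequate Euclidean norm ‖·‖_eu. There is a constant K (depending only on the norm equivalence constant C₁ between ‖·‖_sf and ‖·‖_eu on ℝⁿ and on the bound M of d_cc(0,·) on the Euclidean unit sphere, namely K = 1 + 2C₁M) such that for every ε > 0, every sub-Finsler geodesic γ : [0,1] → G with γ(0) = 0 and γ(1) on the Euclidean unit sphere, and every linear subspace P ≤ ℝⁿ: if d_eu(π(γ(t)), P) < ε for all t ∈ [0,1], then d_eu(γ(1), P × Λ²(P)) < Kε. -/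
open scoped RealInnerProductSpace
open MeasureTheory

noncomputable section

abbrev G (n : ℕ) := E n × Matrix (Fin n) (Fin n) ℝ

def gmul {n : ℕ} (g h : G n) : G n := (g.1 + h.1, g.2 + h.2 + (1 / 2 : ℝ) • wedge g.1 h.1)

def ginv {n : ℕ} (g : G n) : G n := (-g.1, -g.2)

def dil {n : ℕ} (t : ℝ) (g : G n) : G n := (t • g.1, (t ^ 2) • g.2)

def normGeu {n : ℕ} (g : G n) : ℝ := Real.sqrt (‖g.1‖ ^ 2 + innerL g.2 g.2)

def distG {n : ℕ} (g h : G n) : ℝ :=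
  Real.sqrt (‖g.1 - h.1‖ ^ 2 + innerL (g.2 - h.2) (g.2 - h.2))

def distSet {n : ℕ} (g : G n) (S : Set (G n)) : ℝ := sInf (distG g '' S)

def wedgeSpan {n : ℕ} (P : Submodule ℝ (E n)) : Submodule ℝ (Matrix (Fin n) (Fin n) ℝ) :=
  Submodule.span ℝ {B | ∃ x ∈ P, ∃ y ∈ P, B = wedge x y}

def curve {n : ℕ} (u : ℝ → E n) (t : ℝ) : G n :=
  (∫ s in (0:ℝ)..t, u s,
   Matrix.of fun i j => (1 / 2 : ℝ) * ∫ s in (0:ℝ)..t, wedge (∫ τ in (0:ℝ)..s, u τ) (u s) i j)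

def dcc {n : ℕ} (N : E n → ℝ) (g h : G n) : ℝ :=
  sInf {L | ∃ u : ℝ → E n, IntervalIntegrable u volume 0 1 ∧
    curve u 1 = gmul (ginv g) h ∧ L = ∫ t in (0:ℝ)..1, N (u t)}

def Abn (n : ℕ) : Set (G n) :=
  {g | ∃ P : Submodule ℝ (E n), Module.finrank ℝ P = n - 2 ∧ g.1 ∈ P ∧ g.2 ∈ wedgeSpan P}

def emb {n : ℕ} (A : Matrix (Fin n) (Fin n) ℝ) : EuclideanSpace ℝ (Fin n × Fin n) :=
  WithLp.toLp 2 (fun p : Fin n × Fin n => (Real.sqrt 2)⁻¹ * A p.1 p.2)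

lemma innerL_eq {n : ℕ} (A B : Matrix (Fin n) (Fin n) ℝ) : innerL A B = ⟪emb A, emb B⟫ := by
  simp only [innerL, emb, PiLp.inner_apply, RCLike.inner_apply, conj_trivial,
    Fintype.sum_prod_type, PiLp.toLp_apply]
  rw [Finset.mul_sum]
  refine Finset.sum_congr rfl fun i _ => ?_
  rw [Finset.mul_sum]
  refine Finset.sum_congr rfl fun j _ => ?_
  have h2 : (Real.sqrt 2)⁻¹ * (Real.sqrt 2)⁻¹ = 1/2 := by
    rw [← mul_inv, Real.mul_self_sqrt (by norm_num : (0:ℝ) ≤ 2)]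
    norm_num
  calc 1/2 * (A i j * B i j) = ((Real.sqrt 2)⁻¹ * (Real.sqrt 2)⁻¹) * (A i j * B i j) := by rw [h2]
    _ = (Real.sqrt 2)⁻¹ * B i j * ((Real.sqrt 2)⁻¹ * A i j) := by ring

lemma emb_add {n : ℕ} (A B : Matrix (Fin n) (Fin n) ℝ) : emb (A + B) = emb A + emb B := by
  ext p; simp [emb, Matrix.add_apply, mul_add]

lemma emb_sub {n : ℕ} (A B : Matrix (Fin n) (Fin n) ℝ) : emb (A - B) = emb A - emb B := by
  ext p; simp [emb, Matrix.sub_apply]; ring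

lemma emb_smul {n : ℕ} (c : ℝ) (A : Matrix (Fin n) (Fin n) ℝ) : emb (c • A) = c • emb A := by
  ext p; simp [emb, Matrix.smul_apply]; ring

lemma normL_eq {n : ℕ} (A : Matrix (Fin n) (Fin n) ℝ) : normL A = ‖emb A‖ := by
  rw [normL, innerL_eq, real_inner_self_eq_norm_sq, Real.sqrt_sq (norm_nonneg _)]

lemma normL_nonneg {n : ℕ} (A : Matrix (Fin n) (Fin n) ℝ) : 0 ≤ normL A := Real.sqrt_nonneg _

lemma innerL_le {n : ℕ} (A B : Matrix (Fin n) (Fin n) ℝ) : innerL A B ≤ normL A * normL B := by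
  rw [innerL_eq, normL_eq, normL_eq]; exact real_inner_le_norm _ _

lemma normL_add_le {n : ℕ} (A B : Matrix (Fin n) (Fin n) ℝ) :
    normL (A + B) ≤ normL A + normL B := by
  rw [normL_eq, normL_eq, normL_eq, emb_add]; exact norm_add_le _ _

lemma normL_sub_le {n : ℕ} (A B : Matrix (Fin n) (Fin n) ℝ) :
    normL (A - B) ≤ normL A + normL B := by
  rw [normL_eq, normL_eq, normL_eq, emb_sub]; exact norm_sub_le _ _

lemma normL_smul {n : ℕ} (c : ℝ) (A : Matrix (Fin n) (Fin n) ℝ) :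
    normL (c • A) = |c| * normL A := by
  rw [normL_eq, normL_eq, emb_smul, norm_smul, Real.norm_eq_abs]

lemma normL_wedge_le {n : ℕ} (v w : E n) : normL (wedge v w) ≤ ‖v‖ * ‖w‖ := by
  have hV : (∑ i, v i * v i) = ‖v‖ ^ 2 := by
    rw [EuclideanSpace.norm_eq, Real.sq_sqrt (by positivity)]
    exact Finset.sum_congr rfl fun i _ => by rw [Real.norm_eq_abs, sq_abs]; ring
  have hW : (∑ i, w i * w i) = ‖w‖ ^ 2 := by
    rw [EuclideanSpace.norm_eq, Real.sq_sqrt (by positivity)]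
    exact Finset.sum_congr rfl fun i _ => by rw [Real.norm_eq_abs, sq_abs]; ring
  have key : innerL (wedge v w) (wedge v w)
      = ‖v‖^2 * ‖w‖^2 - (∑ i, v i * w i)^2 := by
    have expand : ∀ i : Fin n, ∑ j, (v i * w j - w i * v j) * (v i * w j - w i * v j)
        = v i * v i * (∑ j, w j * w j) - (v i * w i) * (2 * ∑ j, v j * w j)
          + w i * w i * (∑ j, v j * v j) := by
      intro i
      have h : ∀ j : Fin n, (v i * w j - w i * v j) * (v i * w j - w i * v j)
          = v i * v i * (w j * w j) - (v i * w i) * (2 * (v j * w j))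
            + w i * w i * (v j * v j) := fun j => by ring
      simp_rw [h, Finset.sum_add_distrib, Finset.sum_sub_distrib, ← Finset.mul_sum]
    rw [innerL]
    simp only [wedge, Matrix.of_apply]
    rw [Finset.sum_congr rfl fun i _ => expand i]
    simp_rw [Finset.sum_add_distrib, Finset.sum_sub_distrib, ← Finset.sum_mul]
    rw [hV, hW]
    ring
  rw [normL]
  calc Real.sqrt (innerL (wedge v w) (wedge v w)) ≤ Real.sqrt (‖v‖^2 * ‖w‖^2) := by
        apply Real.sqrt_le_sqrt; rw [key]; nlinarith [sq_nonneg (∑ i, v i * w i)]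
    _ = ‖v‖ * ‖w‖ := by
        rw [← mul_pow, Real.sqrt_sq (by positivity)]

lemma parts {f g : ℝ → ℝ} (hf : IntervalIntegrable f volume 0 1)
    (hg : IntervalIntegrable g volume 0 1) :
    (∫ s in (0:ℝ)..1, ((∫ τ in (0:ℝ)..s, f τ) * g s + f s * (∫ τ in (0:ℝ)..s, g τ)))
      = (∫ s in (0:ℝ)..1, f s) * (∫ s in (0:ℝ)..1, g s) := by
  set μ : Measure ℝ := volume.restrict (Set.Ioc (0:ℝ) 1) with hμ
  have hfμ : Integrable f μ := hf.1
  have hgμ : Integrable g μ := hg.1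
  -- the two primitives are continuous on [0,1]
  have hFc : ContinuousOn (fun s => ∫ τ in (0:ℝ)..s, f τ) (Set.uIcc (0:ℝ) 1) :=
    intervalIntegral.continuousOn_primitive_interval' hf (Set.left_mem_uIcc)
  have hGc : ContinuousOn (fun s => ∫ τ in (0:ℝ)..s, g τ) (Set.uIcc (0:ℝ) 1) :=
    intervalIntegral.continuousOn_primitive_interval' hg (Set.left_mem_uIcc)
  have hFg : IntervalIntegrable (fun s => (∫ τ in (0:ℝ)..s, f τ) * g s) volume 0 1 :=
    hg.continuousOn_mul hFc
  have hfG : IntervalIntegrable (fun s => f s * (∫ τ in (0:ℝ)..s, g τ)) volume 0 1 := by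
    have := hf.mul_continuousOn hGc
    exact this
  rw [intervalIntegral.integral_add hFg hfG]
  -- dominating function on the product
  have hdom : Integrable (fun z : ℝ × ℝ => f z.2 * g z.1) (μ.prod μ) := by
    have := hgμ.mul_prod hfμ
    simpa [mul_comm] using this
  -- the two kernels
  set k₁ : ℝ × ℝ → ℝ :=
    fun z => ({p : ℝ × ℝ | 0 < p.2 ∧ p.2 ≤ p.1}).indicator (fun z => f z.2 * g z.1) z with hk₁
  set k₂ : ℝ × ℝ → ℝ :=
    fun z => ({p : ℝ × ℝ | 0 < p.2 ∧ p.2 < p.1}).indicator (fun z => g z.2 * f z.1) z with hk₂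
  have hm₁ : MeasurableSet {p : ℝ × ℝ | 0 < p.2 ∧ p.2 ≤ p.1} := by
    rw [Set.setOf_and]
    exact (measurableSet_lt measurable_const measurable_snd).inter
      (measurableSet_le measurable_snd measurable_fst)
  have hm₂ : MeasurableSet {p : ℝ × ℝ | 0 < p.2 ∧ p.2 < p.1} := by
    rw [Set.setOf_and]
    exact (measurableSet_lt measurable_const measurable_snd).inter
      (measurableSet_lt measurable_snd measurable_fst)
  have Ik₁ : Integrable k₁ (μ.prod μ) := by
    refine hdom.norm.mono' (hdom.aestronglyMeasurable.indicator hm₁) ?_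
    exact Filter.Eventually.of_forall fun z => norm_indicator_le_norm_self _ _
  have hdom' : Integrable (fun z : ℝ × ℝ => g z.2 * f z.1) (μ.prod μ) := by
    have := hfμ.mul_prod hgμ
    simpa [mul_comm] using this
  have Ik₂ : Integrable k₂ (μ.prod μ) := by
    refine hdom'.norm.mono' (hdom'.aestronglyMeasurable.indicator hm₂) ?_
    exact Filter.Eventually.of_forall fun z => norm_indicator_le_norm_self _ _
  -- T₁ as a product integral
  have T₁ : (∫ s in (0:ℝ)..1, (∫ τ in (0:ℝ)..s, f τ) * g s) = ∫ z, k₁ z ∂(μ.prod μ) := by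
    rw [intervalIntegral.integral_of_le zero_le_one]
    have : ∀ s ∈ Set.Ioc (0:ℝ) 1,
        (∫ τ in (0:ℝ)..s, f τ) * g s = ∫ τ, k₁ (s, τ) ∂μ := by
      intro s hs
      have hind : (fun τ => k₁ (s, τ))
          = fun τ => (Set.Ioc (0:ℝ) s).indicator (fun τ => f τ * g s) τ := by
        funext τ
        simp only [hk₁, Set.indicator_apply, Set.mem_setOf_eq, Set.mem_Ioc]
      rw [hind, integral_indicator measurableSet_Ioc]
      rw [hμ, Measure.restrict_restrict measurableSet_Ioc,
        Set.inter_eq_self_of_subset_left (Set.Ioc_subset_Ioc_right hs.2)]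
      rw [MeasureTheory.integral_mul_const]
      rw [intervalIntegral.integral_of_le hs.1.le]
    rw [integral_congr_ae ((ae_restrict_mem measurableSet_Ioc).mono fun s hs => this s hs)]
    exact integral_integral Ik₁
  -- T₂ as a product integral
  have T₂ : (∫ s in (0:ℝ)..1, f s * (∫ τ in (0:ℝ)..s, g τ))
      = ∫ z, k₂ z.swap ∂(μ.prod μ) := by
    have swap_eq : (∫ z, k₂ z.swap ∂(μ.prod μ)) = ∫ z, k₂ z ∂(μ.prod μ) :=
      integral_prod_swap k₂
    rw [swap_eq, intervalIntegral.integral_of_le zero_le_one]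
    have : ∀ s ∈ Set.Ioc (0:ℝ) 1,
        f s * (∫ τ in (0:ℝ)..s, g τ) = ∫ τ, k₂ (s, τ) ∂μ := by
      intro s hs
      have hind : (fun τ => k₂ (s, τ))
          = fun τ => (Set.Ioo (0:ℝ) s).indicator (fun τ => g τ * f s) τ := by
        funext τ
        simp only [hk₂, Set.indicator_apply, Set.mem_setOf_eq, Set.mem_Ioo]
      rw [hind, integral_indicator measurableSet_Ioo]
      rw [hμ, Measure.restrict_restrict measurableSet_Ioo,
        Set.inter_eq_self_of_subset_left
          ((Set.Ioo_subset_Ioc_self).trans (Set.Ioc_subset_Ioc_right hs.2))]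
      rw [MeasureTheory.integral_mul_const]
      rw [intervalIntegral.integral_of_le hs.1.le, integral_Ioc_eq_integral_Ioo]
      ring
    rw [integral_congr_ae ((ae_restrict_mem measurableSet_Ioc).mono fun s hs => this s hs)]
    exact integral_integral Ik₂
  have Ik₂' : Integrable (fun z : ℝ × ℝ => k₂ z.swap) (μ.prod μ) := Ik₂.swap
  rw [T₁, T₂, ← integral_add Ik₁ Ik₂']
  have key : (∫ z, (k₁ z + k₂ z.swap) ∂(μ.prod μ)) = ∫ z : ℝ × ℝ, f z.2 * g z.1 ∂(μ.prod μ) := by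
    refine integral_congr_ae ?_
    have hprod : μ.prod μ = (volume.prod volume).restrict
        ((Set.Ioc (0:ℝ) 1) ×ˢ (Set.Ioc (0:ℝ) 1)) := by
      rw [hμ, Measure.prod_restrict]
    rw [hprod]
    refine (ae_restrict_mem (measurableSet_Ioc.prod measurableSet_Ioc)).mono ?_
    rintro ⟨s, τ⟩ ⟨hs, hτ⟩
    simp only [hk₁, hk₂, Prod.swap, Set.indicator_apply, Set.mem_setOf_eq]
    rcases le_or_gt τ s with h | h
    · rw [if_pos ⟨hτ.1, h⟩, if_neg (by rintro ⟨-, hc⟩; exact absurd h (not_le.2 hc))]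
      ring
    · rw [if_neg (by rintro ⟨-, hc⟩; exact absurd hc (not_le.2 h)), if_pos ⟨hs.1, h⟩]
      ring
  rw [key]
  have : (∫ z : ℝ × ℝ, f z.2 * g z.1 ∂(μ.prod μ))
      = (∫ x, g x ∂μ) * (∫ x, f x ∂μ) := by
    rw [← integral_prod_mul g f]
    exact integral_congr_ae (Filter.Eventually.of_forall fun z => mul_comm _ _)
  rw [this, intervalIntegral.integral_of_le zero_le_one,
    intervalIntegral.integral_of_le zero_le_one]
  ring

lemma II_sum {ι : Type*} (s : Finset ι) (f : ι → ℝ → ℝ)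
    (h : ∀ i ∈ s, IntervalIntegrable (f i) volume 0 1) :
    IntervalIntegrable (fun x => ∑ i ∈ s, f i x) volume 0 1 := by
  have h2 := IntervalIntegrable.sum s h
  have h3 : (∑ i ∈ s, f i) = fun x => ∑ i ∈ s, f i x := by
    funext x; exact Finset.sum_apply _ _ _
  rwa [h3] at h2

lemma innerL_self_nonneg {n : ℕ} (A : Matrix (Fin n) (Fin n) ℝ) : 0 ≤ innerL A A := by
  rw [innerL_eq]; exact real_inner_self_nonneg

set_option maxHeartbeats 2000000 in
lemma normL_integral_le {n : ℕ} {M : ℝ → Matrix (Fin n) (Fin n) ℝ} {b : ℝ → ℝ}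
    (hM : ∀ i j, IntervalIntegrable (fun s => M s i j) volume 0 1)
    (hb : IntervalIntegrable b volume 0 1)
    (hbd : ∀ s ∈ Set.Icc (0:ℝ) 1, normL (M s) ≤ b s) :
    normL (Matrix.of fun i j => ∫ s in (0:ℝ)..1, M s i j) ≤ ∫ s in (0:ℝ)..1, b s := by
  set W : Matrix (Fin n) (Fin n) ℝ := Matrix.of fun i j => ∫ s in (0:ℝ)..1, M s i j with hW
  have hb0 : 0 ≤ ∫ s in (0:ℝ)..1, b s := by
    apply intervalIntegral.integral_nonneg zero_le_one
    exact fun s hs => le_trans (normL_nonneg _) (hbd s hs)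
  have hWint : ∀ p : Fin n × Fin n,
      IntervalIntegrable (fun s => (1/2 : ℝ) * (W p.1 p.2 * M s p.1 p.2)) volume 0 1 :=
    fun p => ((hM p.1 p.2).const_mul _).const_mul _
  have hinner_int : IntervalIntegrable (fun s => innerL W (M s)) volume 0 1 := by
    have heq : (fun s => innerL W (M s))
        = fun s => ∑ p : Fin n × Fin n, (1/2 : ℝ) * (W p.1 p.2 * M s p.1 p.2) := by
      funext s
      rw [innerL, Finset.mul_sum, Fintype.sum_prod_type]
      exact Finset.sum_congr rfl fun i _ => by rw [Finset.mul_sum]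
    rw [heq]
    exact II_sum _ _ fun p _ => hWint p
  have key : innerL W W = ∫ s in (0:ℝ)..1, innerL W (M s) := by
    have : ∀ s : ℝ, innerL W (M s)
        = ∑ p : Fin n × Fin n, (1/2 : ℝ) * (W p.1 p.2 * M s p.1 p.2) := by
      intro s
      rw [innerL, Finset.mul_sum, Fintype.sum_prod_type]
      exact Finset.sum_congr rfl fun i _ => by rw [Finset.mul_sum]
    simp_rw [this]
    rw [intervalIntegral.integral_finset_sum fun p _ => hWint p]
    rw [innerL, Finset.mul_sum, Fintype.sum_prod_type]
    refine Finset.sum_congr rfl fun i _ => ?_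
    rw [Finset.mul_sum]
    refine Finset.sum_congr rfl fun j _ => ?_
    rw [intervalIntegral.integral_const_mul, intervalIntegral.integral_const_mul]
    simp [hW]
  have step : innerL W W ≤ normL W * ∫ s in (0:ℝ)..1, b s := by
    rw [key, ← intervalIntegral.integral_const_mul]
    apply intervalIntegral.integral_mono_on zero_le_one hinner_int (hb.const_mul _)
    intro s hs
    calc innerL W (M s) ≤ normL W * normL (M s) := innerL_le _ _
      _ ≤ normL W * b s := mul_le_mul_of_nonneg_left (hbd s hs) (normL_nonneg _)
  rcases eq_or_lt_of_le (normL_nonneg W) with h0 | hpos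
  · rw [← h0]; exact hb0
  · have hsq : normL W * normL W = innerL W W := Real.mul_self_sqrt (innerL_self_nonneg W)
    exact le_of_mul_le_mul_left (by rw [hsq]; exact step) hpos

def prL {n : ℕ} (P : Submodule ℝ (E n)) : E n →L[ℝ] E n :=
  P.subtypeL.comp (Submodule.orthogonalProjection P)

lemma prL_mem {n : ℕ} (P : Submodule ℝ (E n)) (v : E n) : prL P v ∈ P :=
  (Submodule.orthogonalProjection P v).2

lemma norm_prL_le {n : ℕ} (P : Submodule ℝ (E n)) (v : E n) : ‖prL P v‖ ≤ ‖v‖ := by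
  have h1 : ‖prL P v‖ = ‖Submodule.orthogonalProjection P v‖ := rfl
  rw [h1]
  calc ‖Submodule.orthogonalProjection P v‖ ≤ ‖Submodule.orthogonalProjection P‖ * ‖v‖ :=
        (Submodule.orthogonalProjection P).le_opNorm v
    _ ≤ 1 * ‖v‖ := mul_le_mul_of_nonneg_right (Submodule.orthogonalProjection_norm_le P) (norm_nonneg v)
    _ = ‖v‖ := one_mul _

lemma norm_sub_prL_le {n : ℕ} (P : Submodule ℝ (E n)) (v w : E n) (hw : w ∈ P) :
    ‖v - prL P v‖ ≤ ‖v - w‖ := by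
  have ho : ⟪v - prL P v, prL P v - w⟫ = 0 :=
    Submodule.starProjection_inner_eq_zero (K := P) v _ (Submodule.sub_mem P (prL_mem P v) hw)
  have hsplit : v - w = (v - prL P v) + (prL P v - w) := by abel
  have hsq : ‖v - w‖ ^ 2 = ‖v - prL P v‖ ^ 2 + ‖prL P v - w‖ ^ 2 := by
    rw [hsplit, norm_add_sq_real, ho]; ring
  nlinarith [norm_nonneg (v - w), norm_nonneg (v - prL P v), norm_nonneg (prL P v - w)]

lemma sub_prL_le_infDist {n : ℕ} (P : Submodule ℝ (E n)) (v : E n) :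
    ‖v - prL P v‖ ≤ Metric.infDist v (P : Set (E n)) := by
  rw [Metric.infDist_eq_iInf]
  have hne : Nonempty (P : Set (E n)) := ⟨⟨0, P.zero_mem⟩⟩
  refine le_ciInf fun w => ?_
  rw [dist_eq_norm]
  exact norm_sub_prL_le P v w w.2


-- coordinate functionals
def pjL {n : ℕ} (i : Fin n) : E n →L[ℝ] ℝ := EuclideanSpace.proj i
def aLf {n : ℕ} (P : Submodule ℝ (E n)) (i : Fin n) : E n →L[ℝ] ℝ := (pjL i).comp (prL P)
def qLf {n : ℕ} (P : Submodule ℝ (E n)) (i : Fin n) : E n →L[ℝ] ℝ := pjL i - aLf P i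

lemma pjL_apply {n : ℕ} (i : Fin n) (v : E n) : pjL i v = v i := rfl
lemma aLf_apply {n : ℕ} (P : Submodule ℝ (E n)) (i : Fin n) (v : E n) :
    aLf P i v = prL P v i := rfl
lemma Esub_apply {n : ℕ} (v w : E n) (i : Fin n) : (v - w) i = v i - w i := rfl
lemma qLf_apply {n : ℕ} (P : Submodule ℝ (E n)) (i : Fin n) (v : E n) :
    qLf P i v = v i - prL P v i := by
  rw [qLf, ContinuousLinearMap.sub_apply, pjL_apply, aLf_apply]
lemma pj_split {n : ℕ} (P : Submodule ℝ (E n)) (i : Fin n) (v : E n) :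
    pjL i v = aLf P i v + qLf P i v := by
  rw [pjL_apply, aLf_apply, qLf_apply]; ring
lemma wedge_apply {n : ℕ} (v w : E n) (i j : Fin n) :
    wedge v w i j = v i * w j - w i * v j := rfl

lemma II_comp {n : ℕ} {F : Type*} [NormedAddCommGroup F] [NormedSpace ℝ F] [CompleteSpace F]
    {u : ℝ → E n} (hu : IntervalIntegrable u volume 0 1) (L : E n →L[ℝ] F) :
    IntervalIntegrable (fun s => L (u s)) volume 0 1 :=
  ⟨L.integrable_comp hu.1, L.integrable_comp hu.2⟩

lemma primId {n : ℕ} {u x : ℝ → E n} (hu : IntervalIntegrable u volume 0 1)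
    (hx : ∀ t, x t = ∫ τ in (0:ℝ)..t, u τ) (L : E n →L[ℝ] ℝ) {s : ℝ}
    (hs : s ∈ Set.Icc (0:ℝ) 1) :
    L (x s) = ∫ τ in (0:ℝ)..s, L (u τ) := by
  have hus : IntervalIntegrable u volume 0 s := by
    refine hu.mono_set ?_
    rw [Set.uIcc_of_le hs.1, Set.uIcc_of_le zero_le_one]
    exact Set.Icc_subset_Icc le_rfl hs.2
  rw [hx s]
  exact (L.intervalIntegral_comp_comm hus).symm

lemma parts_vec {n : ℕ} {u x : ℝ → E n} (hu : IntervalIntegrable u volume 0 1)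
    (hx : ∀ t, x t = ∫ τ in (0:ℝ)..t, u τ) (L K : E n →L[ℝ] ℝ) :
    (∫ s in (0:ℝ)..1, (L (x s) * K (u s) + L (u s) * K (x s)))
      = L (x 1) * K (x 1) := by
  have hf : IntervalIntegrable (fun s => L (u s)) volume 0 1 := II_comp hu L
  have hg : IntervalIntegrable (fun s => K (u s)) volume 0 1 := II_comp hu K
  have hp := parts hf hg
  have heqon : Set.EqOn (fun s => L (x s) * K (u s) + L (u s) * K (x s))
      (fun s => (∫ τ in (0:ℝ)..s, L (u τ)) * K (u s) + L (u s) * (∫ τ in (0:ℝ)..s, K (u τ)))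
      (Set.uIcc (0:ℝ) 1) := by
    intro s hs
    rw [Set.uIcc_of_le zero_le_one] at hs
    simp only
    rw [primId hu hx L hs, primId hu hx K hs]
  rw [intervalIntegral.integral_congr heqon, hp,
    primId hu hx L (Set.mem_Icc.2 ⟨zero_le_one, le_rfl⟩),
    primId hu hx K (Set.mem_Icc.2 ⟨zero_le_one, le_rfl⟩)]

lemma distG_le_add {n : ℕ} (g h : G n) :
    distG g h ≤ ‖g.1 - h.1‖ + normL (g.2 - h.2) := by
  rw [distG]
  have h1 : innerL (g.2 - h.2) (g.2 - h.2) = normL (g.2 - h.2) ^ 2 :=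
    (Real.sq_sqrt (innerL_self_nonneg _)).symm
  rw [h1]
  have h2 : ‖g.1 - h.1‖ ^ 2 + normL (g.2 - h.2) ^ 2
      ≤ (‖g.1 - h.1‖ + normL (g.2 - h.2)) ^ 2 := by
    nlinarith [norm_nonneg (g.1 - h.1), normL_nonneg (g.2 - h.2)]
  calc Real.sqrt (‖g.1 - h.1‖ ^ 2 + normL (g.2 - h.2) ^ 2)
      ≤ Real.sqrt ((‖g.1 - h.1‖ + normL (g.2 - h.2)) ^ 2) := Real.sqrt_le_sqrt h2
    _ = ‖g.1 - h.1‖ + normL (g.2 - h.2) := Real.sqrt_sq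
        (by have := norm_nonneg (g.1 - h.1); have := normL_nonneg (g.2 - h.2); linarith)

set_option maxHeartbeats 1600000 in
/-- with `K = 1 + 2C₁M`, if a geodesic from the origin ending on the
Euclidean unit sphere has first-layer projection within distance `ε` of a subspace
`P ≤ ℝⁿ` at all times, then its endpoint is within `Kε` of `P × Λ²(P)`. -/
theorem stmt_15 (n : ℕ) (N : E n → ℝ)
    (hN0 : ∀ v, 0 ≤ N v) (hNeq : ∀ v, N v = 0 ↔ v = 0)
    (hNhom : ∀ (c : ℝ) (v : E n), N (c • v) = |c| * N v)
    (hNadd : ∀ v w : E n, N (v + w) ≤ N v + N w)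
    (C₁ M : ℝ)
    (hC₁ : ∀ v : E n, C₁⁻¹ * ‖v‖ ≤ N v ∧ N v ≤ C₁ * ‖v‖)
    (hM : ∀ g : G n, normGeu g = 1 → dcc N 0 g ≤ M) :
    ∀ ε > (0 : ℝ), ∀ u : ℝ → E n, IntervalIntegrable u volume 0 1 →
      (∫ t in (0:ℝ)..1, N (u t)) = dcc N 0 (curve u 1) →
      normGeu (curve u 1) = 1 →
      ∀ P : Submodule ℝ (E n),
        (∀ t ∈ Set.Icc (0 : ℝ) 1,
          Metric.infDist ((curve u t).1) (P : Set (E n)) < ε) →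
        distSet (curve u 1) {g : G n | g.1 ∈ P ∧ g.2 ∈ wedgeSpan P} <
          (1 + 2 * C₁ * M) * ε := by

  intro ε hε u hu hgeo hunit P hdist
  classical
  rcases Nat.eq_zero_or_pos n with hn | hn
  · exfalso
    subst hn
    rw [normGeu, show (curve u 1).1 = (0 : E 0) from Subsingleton.elim _ _] at hunit
    simp [innerL] at hunit
  have hC₁pos : 0 < C₁ := by
    set i0 : Fin n := ⟨0, hn⟩
    set v : E n := EuclideanSpace.single i0 1 with hv
    have hnv : ‖v‖ = 1 := by
      rw [hv, EuclideanSpace.norm_single]; norm_num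
    have hv0 : v ≠ 0 := by
      intro h
      rw [h, norm_zero] at hnv
      norm_num at hnv
    have hNv : 0 < N v := lt_of_le_of_ne (hN0 v) fun h => hv0 ((hNeq v).1 h.symm)
    have h2 := (hC₁ v).2
    rw [hnv] at h2
    linarith
  have habs : ∀ v w : E n, |N v - N w| ≤ C₁ * ‖v - w‖ := by
    intro v w
    rw [abs_sub_le_iff]
    constructor
    · have h1 : N v ≤ N (v - w) + N w := by
        have := hNadd (v - w) w
        simpa using this
      have := (hC₁ (v - w)).2
      linarith
    · have h1 : N w ≤ N (w - v) + N v := by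
        have := hNadd (w - v) v
        simpa using this
      have h2 := (hC₁ (w - v)).2
      rw [norm_sub_rev] at h2
      linarith
  have hNcont : Continuous N := by
    refine (LipschitzWith.of_dist_le_mul (K := C₁.toNNReal) ?_).continuous
    intro v w
    rw [Real.dist_eq, dist_eq_norm]
    calc |N v - N w| ≤ C₁ * ‖v - w‖ := habs v w
      _ ≤ (C₁.toNNReal : ℝ) * ‖v - w‖ :=
        mul_le_mul_of_nonneg_right (Real.le_coe_toNNReal C₁) (norm_nonneg _)
  have hNu_int : IntervalIntegrable (fun t => N (u t)) volume 0 1 := by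
    constructor
    · refine (hu.1.norm.const_mul C₁).mono'
        (hNcont.comp_aestronglyMeasurable hu.1.aestronglyMeasurable) ?_
      refine Filter.Eventually.of_forall fun t => ?_
      rw [Real.norm_eq_abs, abs_of_nonneg (hN0 _)]
      exact (hC₁ (u t)).2
    · refine (hu.2.norm.const_mul C₁).mono'
        (hNcont.comp_aestronglyMeasurable hu.2.aestronglyMeasurable) ?_
      refine Filter.Eventually.of_forall fun t => ?_
      rw [Real.norm_eq_abs, abs_of_nonneg (hN0 _)]
      exact (hC₁ (u t)).2
  have hLM : (∫ t in (0:ℝ)..1, N (u t)) ≤ M := by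
    rw [hgeo]; exact hM _ hunit
  set S : ℝ := ∫ s in (0:ℝ)..1, ‖u s‖ with hSdef
  have hS0 : 0 ≤ S :=
    intervalIntegral.integral_nonneg zero_le_one fun t _ => norm_nonneg _
  have hSCM : S ≤ C₁ * M := by
    have h1 : S ≤ ∫ t in (0:ℝ)..1, C₁ * N (u t) := by
      apply intervalIntegral.integral_mono_on zero_le_one hu.norm (hNu_int.const_mul C₁)
      intro t _
      have h := (hC₁ (u t)).1
      calc ‖u t‖ = C₁ * (C₁⁻¹ * ‖u t‖) := by field_simp
        _ ≤ C₁ * N (u t) := mul_le_mul_of_nonneg_left h hC₁pos.le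
    rw [intervalIntegral.integral_const_mul] at h1
    calc S ≤ C₁ * ∫ t in (0:ℝ)..1, N (u t) := h1
      _ ≤ C₁ * M := mul_le_mul_of_nonneg_left hLM hC₁pos.le
  -- geometry setup
  set x : ℝ → E n := fun t => ∫ τ in (0:ℝ)..t, u τ with hxdef
  have hx : ∀ t, x t = ∫ τ in (0:ℝ)..t, u τ := fun t => rfl
  have hxc : ContinuousOn x (Set.uIcc (0:ℝ) 1) :=
    intervalIntegral.continuousOn_primitive_interval' hu Set.left_mem_uIcc
  have hLxc : ∀ L : E n →L[ℝ] ℝ, ContinuousOn (fun s => L (x s)) (Set.uIcc (0:ℝ) 1) :=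
    fun L => L.continuous.comp_continuousOn hxc
  have hIxu : ∀ L K : E n →L[ℝ] ℝ,
      IntervalIntegrable (fun s => L (x s) * K (u s)) volume 0 1 :=
    fun L K => (II_comp hu K).continuousOn_mul (hLxc L)
  have hIux : ∀ L K : E n →L[ℝ] ℝ,
      IntervalIntegrable (fun s => L (u s) * K (x s)) volume 0 1 :=
    fun L K => (II_comp hu L).mul_continuousOn (hLxc K)
  -- wedge entry rewriting
  have hwxu : ∀ i j : Fin n, (fun s => wedge (x s) (u s) i j)
      = fun s => pjL i (x s) * pjL j (u s) - pjL i (u s) * pjL j (x s) := by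
    intro i j; funext s
    rw [wedge_apply, pjL_apply, pjL_apply, pjL_apply, pjL_apply]
  have hwpp : ∀ i j : Fin n, (fun s => wedge (prL P (x s)) (prL P (u s)) i j)
      = fun s => aLf P i (x s) * aLf P j (u s) - aLf P i (u s) * aLf P j (x s) := by
    intro i j; funext s
    rw [wedge_apply, aLf_apply, aLf_apply, aLf_apply, aLf_apply]
  have hwqu : ∀ i j : Fin n, (fun s => wedge (x s - prL P (x s)) (u s) i j)
      = fun s => qLf P i (x s) * pjL j (u s) - pjL i (u s) * qLf P j (x s) := by
    intro i j; funext s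
    rw [wedge_apply, qLf_apply, qLf_apply, pjL_apply, pjL_apply,
      Esub_apply, Esub_apply]
  have hwpq : ∀ i j : Fin n, (fun s => wedge (prL P (u s)) (x s - prL P (x s)) i j)
      = fun s => aLf P i (u s) * qLf P j (x s) - qLf P i (x s) * aLf P j (u s) := by
    intro i j; funext s
    rw [wedge_apply, qLf_apply, qLf_apply, aLf_apply, aLf_apply,
      Esub_apply, Esub_apply]
  -- matrices
  set Y' : Matrix (Fin n) (Fin n) ℝ :=
    Matrix.of (fun i j => (1/2 : ℝ) * ∫ s in (0:ℝ)..1, wedge (prL P (x s)) (prL P (u s)) i j)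
    with hY'def
  set Amat : Matrix (Fin n) (Fin n) ℝ :=
    Matrix.of (fun i j => ∫ s in (0:ℝ)..1, wedge (x s - prL P (x s)) (u s) i j) with hAdef
  set Cmat : Matrix (Fin n) (Fin n) ℝ :=
    Matrix.of (fun i j => ∫ s in (0:ℝ)..1, wedge (prL P (u s)) (x s - prL P (x s)) i j)
    with hCdef
  set Wmat : Matrix (Fin n) (Fin n) ℝ := wedge (prL P (x 1)) (x 1 - prL P (x 1)) with hWdef
  -- decomposition identity
  have hD : (curve u 1).2 - Y' = (1/2 : ℝ) • (Amat + Wmat - Cmat) := by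
    have hc2 : (curve u 1).2
        = Matrix.of (fun i j => (1/2 : ℝ) * ∫ s in (0:ℝ)..1, wedge (x s) (u s) i j) := rfl
    rw [hc2, hY'def, hAdef, hCdef, hWdef]
    ext i j
    simp only [Matrix.sub_apply, Matrix.add_apply, Matrix.smul_apply, Matrix.of_apply,
      smul_eq_mul]
    have h1 := (hIxu (pjL i) (pjL j)).sub (hIux (pjL i) (pjL j))
    have h2 := (hIxu (aLf P i) (aLf P j)).sub (hIux (aLf P i) (aLf P j))
    have hA := (hIxu (qLf P i) (pjL j)).sub (hIux (pjL i) (qLf P j))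
    have hC := (hIux (aLf P i) (qLf P j)).sub (hIxu (qLf P i) (aLf P j))
    have hP1 := (hIxu (aLf P i) (qLf P j)).add (hIux (aLf P i) (qLf P j))
    have hP2 := (hIxu (qLf P i) (aLf P j)).add (hIux (qLf P i) (aLf P j))
    rw [hwxu i j, hwpp i j, hwqu i j, hwpq i j]
    have comb :
        (∫ s in (0:ℝ)..1, (pjL i (x s) * pjL j (u s) - pjL i (u s) * pjL j (x s)))
        - (∫ s in (0:ℝ)..1, (aLf P i (x s) * aLf P j (u s) - aLf P i (u s) * aLf P j (x s)))
        - ((∫ s in (0:ℝ)..1, (qLf P i (x s) * pjL j (u s) - pjL i (u s) * qLf P j (x s)))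
           - (∫ s in (0:ℝ)..1, (aLf P i (u s) * qLf P j (x s) - qLf P i (x s) * aLf P j (u s))))
        = aLf P i (x 1) * qLf P j (x 1) - qLf P i (x 1) * aLf P j (x 1) := by
      rw [← intervalIntegral.integral_sub h1 h2, ← intervalIntegral.integral_sub hA hC,
        ← intervalIntegral.integral_sub (h1.sub h2) (hA.sub hC)]
      have hintg : (fun s => pjL i (x s) * pjL j (u s) - pjL i (u s) * pjL j (x s)
          - (aLf P i (x s) * aLf P j (u s) - aLf P i (u s) * aLf P j (x s))
          - (qLf P i (x s) * pjL j (u s) - pjL i (u s) * qLf P j (x s)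
             - (aLf P i (u s) * qLf P j (x s) - qLf P i (x s) * aLf P j (u s))))
          = fun s => (aLf P i (x s) * qLf P j (u s) + aLf P i (u s) * qLf P j (x s))
              - (qLf P i (x s) * aLf P j (u s) + qLf P i (u s) * aLf P j (x s)) := by
        funext s
        rw [pj_split P i (x s), pj_split P j (x s), pj_split P i (u s), pj_split P j (u s)]
        ring
      rw [hintg, intervalIntegral.integral_sub hP1 hP2,
        parts_vec hu hx (aLf P i) (qLf P j), parts_vec hu hx (qLf P i) (aLf P j)]
    have hWij : wedge (prL P (x 1)) (x 1 - prL P (x 1)) i j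
        = aLf P i (x 1) * qLf P j (x 1) - qLf P i (x 1) * aLf P j (x 1) := by
      rw [wedge_apply, qLf_apply, qLf_apply, aLf_apply, aLf_apply, Esub_apply, Esub_apply]
    rw [hWij]
    linarith [comb]
  -- distance of x to P along the curve
  have hqx : ∀ s ∈ Set.Icc (0:ℝ) 1, ‖x s - prL P (x s)‖ < ε := by
    intro s hs
    have h1 : ‖x s - prL P (x s)‖ ≤ Metric.infDist (x s) (P : Set (E n)) :=
      sub_prL_le_infDist P (x s)
    have h2 := hdist s hs
    have h3 : (curve u s).1 = x s := rfl
    rw [h3] at h2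
    exact lt_of_le_of_lt h1 h2
  have hx1S : ‖x 1‖ ≤ S := by
    rw [hx 1, hSdef]
    exact intervalIntegral.norm_integral_le_integral_norm zero_le_one
  have hprx1 : ‖prL P (x 1)‖ ≤ S := le_trans (norm_prL_le P (x 1)) hx1S
  -- normL bounds on the three matrices
  have hbub : IntervalIntegrable (fun s => ε * ‖u s‖) volume 0 1 := hu.norm.const_mul ε
  have hεS : (∫ s in (0:ℝ)..1, ε * ‖u s‖) = ε * S := by
    rw [intervalIntegral.integral_const_mul]
  have hAbound : normL Amat ≤ ε * S := by
    rw [hAdef, ← hεS]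
    refine normL_integral_le ?_ hbub ?_
    · intro i j
      rw [hwqu i j]
      exact (hIxu (qLf P i) (pjL j)).sub (hIux (pjL i) (qLf P j))
    · intro s hs
      refine le_trans (normL_wedge_le _ _) ?_
      exact mul_le_mul_of_nonneg_right (hqx s hs).le (norm_nonneg _)
  have hCbound : normL Cmat ≤ ε * S := by
    rw [hCdef, ← hεS]
    refine normL_integral_le ?_ hbub ?_
    · intro i j
      rw [hwpq i j]
      exact (hIux (aLf P i) (qLf P j)).sub (hIxu (qLf P i) (aLf P j))
    · intro s hs
      refine le_trans (normL_wedge_le _ _) ?_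
      calc ‖prL P (u s)‖ * ‖x s - prL P (x s)‖ ≤ ‖u s‖ * ε :=
            mul_le_mul (norm_prL_le P (u s)) (hqx s hs).le (norm_nonneg _) (norm_nonneg _)
        _ = ε * ‖u s‖ := mul_comm _ _
  set a1 : ℝ := ‖x 1 - prL P (x 1)‖ with ha1def
  have ha1ε : a1 < ε := hqx 1 ⟨zero_le_one, le_rfl⟩
  have hWbound : normL Wmat ≤ S * a1 := by
    rw [hWdef, ha1def]
    exact le_trans (normL_wedge_le _ _)
      (mul_le_mul_of_nonneg_right hprx1 (norm_nonneg _))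
  have hDbound : normL ((curve u 1).2 - Y') ≤ (1/2 : ℝ) * (ε * S + S * a1 + ε * S) := by
    rw [hD, normL_smul]
    have h3 : normL (Amat + Wmat - Cmat) ≤ ε * S + S * a1 + ε * S := by
      calc normL (Amat + Wmat - Cmat) ≤ normL (Amat + Wmat) + normL Cmat := normL_sub_le _ _
        _ ≤ normL Amat + normL Wmat + normL Cmat := by
            linarith [normL_add_le Amat Wmat]
        _ ≤ ε * S + S * a1 + ε * S := by linarith
    have habs2 : |(1/2 : ℝ)| = 1/2 := by norm_num
    rw [habs2]
    linarith [h3]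
  -- membership of the candidate point
  have hLsum : ∀ (L : E n →L[ℝ] ℝ) (v : E n),
      L v = ∑ k, v k * L ((EuclideanSpace.basisFun (Fin n) ℝ) k) := by
    intro L v
    conv_lhs => rw [← (EuclideanSpace.basisFun (Fin n) ℝ).sum_repr v]
    rw [map_sum]
    refine Finset.sum_congr rfl fun k _ => ?_
    rw [_root_.map_smul, smul_eq_mul, EuclideanSpace.basisFun_repr]
  have hY'mem : Y' ∈ wedgeSpan P := by
    have hrep : Y' = ∑ p : Fin n × Fin n,
        ((1/2 : ℝ) * ∫ s in (0:ℝ)..1, pjL p.1 (x s) * pjL p.2 (u s))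
          • wedge (prL P ((EuclideanSpace.basisFun (Fin n) ℝ) p.1))
              (prL P ((EuclideanSpace.basisFun (Fin n) ℝ) p.2)) := by
      rw [hY'def]
      ext i j
      rw [Matrix.sum_apply]
      simp only [Matrix.smul_apply, smul_eq_mul, Matrix.of_apply]
      have hinteg : (fun s => wedge (prL P (x s)) (prL P (u s)) i j)
          = fun s => ∑ p : Fin n × Fin n, (pjL p.1 (x s) * pjL p.2 (u s))
              * wedge (prL P ((EuclideanSpace.basisFun (Fin n) ℝ) p.1))
                  (prL P ((EuclideanSpace.basisFun (Fin n) ℝ) p.2)) i j := by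
        funext s
        rw [wedge_apply]
        rw [← aLf_apply P i (x s), ← aLf_apply P j (u s),
          ← aLf_apply P i (u s), ← aLf_apply P j (x s)]
        rw [hLsum (aLf P i) (x s), hLsum (aLf P j) (u s),
          hLsum (aLf P i) (u s), hLsum (aLf P j) (x s)]
        rw [Finset.sum_mul_sum, Finset.sum_mul_sum]
        have hswap : (∑ k : Fin n, ∑ l : Fin n,
              (u s k * aLf P i ((EuclideanSpace.basisFun (Fin n) ℝ) k))
                * (x s l * aLf P j ((EuclideanSpace.basisFun (Fin n) ℝ) l)))
            = ∑ k : Fin n, ∑ l : Fin n,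
              (u s l * aLf P i ((EuclideanSpace.basisFun (Fin n) ℝ) l))
                * (x s k * aLf P j ((EuclideanSpace.basisFun (Fin n) ℝ) k)) :=
          Finset.sum_comm
        rw [hswap, Fintype.sum_prod_type, ← Finset.sum_sub_distrib]
        refine Finset.sum_congr rfl fun k _ => ?_
        rw [← Finset.sum_sub_distrib]
        refine Finset.sum_congr rfl fun l _ => ?_
        rw [wedge_apply, pjL_apply, pjL_apply]
        rw [← aLf_apply P i ((EuclideanSpace.basisFun (Fin n) ℝ) k),
          ← aLf_apply P j ((EuclideanSpace.basisFun (Fin n) ℝ) l),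
          ← aLf_apply P i ((EuclideanSpace.basisFun (Fin n) ℝ) l),
          ← aLf_apply P j ((EuclideanSpace.basisFun (Fin n) ℝ) k)]
        ring
      have hsum := intervalIntegral.integral_finset_sum (μ := volume) (a := (0:ℝ)) (b := (1:ℝ))
        (s := (Finset.univ : Finset (Fin n × Fin n)))
        (f := fun (p : Fin n × Fin n) s => (pjL p.1 (x s) * pjL p.2 (u s))
          * wedge (prL P ((EuclideanSpace.basisFun (Fin n) ℝ) p.1))
              (prL P ((EuclideanSpace.basisFun (Fin n) ℝ) p.2)) i j)
        (fun p _ => (hIxu (pjL p.1) (pjL p.2)).mul_const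
          (wedge (prL P ((EuclideanSpace.basisFun (Fin n) ℝ) p.1))
              (prL P ((EuclideanSpace.basisFun (Fin n) ℝ) p.2)) i j))
      rw [hinteg, hsum, Finset.mul_sum]
      refine Finset.sum_congr rfl fun p _ => ?_
      rw [intervalIntegral.integral_mul_const
        (wedge (prL P ((EuclideanSpace.basisFun (Fin n) ℝ) p.1))
              (prL P ((EuclideanSpace.basisFun (Fin n) ℝ) p.2)) i j)
        (fun s => pjL p.1 (x s) * pjL p.2 (u s))]
      ring
    rw [hrep]
    refine Submodule.sum_mem _ fun p _ => Submodule.smul_mem _ _ ?_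
    exact Submodule.subset_span ⟨_, prL_mem P _, _, prL_mem P _, rfl⟩
  have hcand : ((prL P (x 1), Y') : G n) ∈ {g : G n | g.1 ∈ P ∧ g.2 ∈ wedgeSpan P} :=
    ⟨prL_mem P _, hY'mem⟩
  have hds : distSet (curve u 1) {g : G n | g.1 ∈ P ∧ g.2 ∈ wedgeSpan P}
      ≤ distG (curve u 1) (prL P (x 1), Y') := by
    rw [distSet]
    refine csInf_le ⟨0, ?_⟩ ⟨_, hcand, rfl⟩
    rintro r ⟨h, -, rfl⟩
    exact Real.sqrt_nonneg _
  have hdg : distG (curve u 1) (prL P (x 1), Y')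
      ≤ a1 + (1/2 : ℝ) * (ε * S + S * a1 + ε * S) := by
    have h0 := distG_le_add (curve u 1) (prL P (x 1), Y')
    have hfst : (curve u 1).1 - ((prL P (x 1), Y') : G n).1 = x 1 - prL P (x 1) := rfl
    have hsnd : (curve u 1).2 - ((prL P (x 1), Y') : G n).2 = (curve u 1).2 - Y' := rfl
    rw [hfst, hsnd] at h0
    rw [← ha1def] at h0
    linarith [hDbound]
  have hfin : a1 + (1/2 : ℝ) * (ε * S + S * a1 + ε * S) < (1 + 2 * C₁ * M) * ε := by
    have ha10 : 0 ≤ a1 := norm_nonneg _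
    have h1 : S * a1 ≤ S * ε := mul_le_mul_of_nonneg_left ha1ε.le hS0
    have h2 : ε * S ≤ ε * (C₁ * M) := mul_le_mul_of_nonneg_left hSCM hε.le
    have h3 : 0 ≤ ε * S := mul_nonneg hε.le hS0
    nlinarith [h1, h2, h3, ha1ε, hε]
  exact lt_of_le_of_lt (le_trans hds hdg) hfin
end
end
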